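/- arXiv:2105.14254 — 4 statements merged into one kernel-verified Lean document; each statement's English description precedes it below -/
import Mathlib

section
/- Let W be a Weyl group with left weak Bruhat order ≤_L characterized by v ≤_L w iff Φ(v) ⊆ Φ(w). Suppose there is a 'diamond': four elements d ≤_L b, d ≤_L c, b ≤_L a, c ≤_L a with b ≠ c, where each covering relation is labeled by simple roots: b = s_α d, c = s_β d, a = s_γ b, a = s_δ c (with each step increasing length by 1). Then α = δ, β = γ, and s_α s_β = s_β s_α. -/
/-!
STATEMENT 1 (diamond lemma in the left weak Bruhat order).  Setting: a reduced
crystallographic root system `Φ` with positive system `Φ⁺` in a finite-dimensional real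
inner product space; the Weyl group `W` is generated by the reflections `s_β` in the roots;
simple roots are the indecomposable positive roots; the left weak order is characterized by
inclusion of inversion sets `Φ(v) = Φ⁺ ∩ v⁻¹(Φ⁻)`, and a weak covering relation `v ⋖ w`
(with label a simple root `α`) means `w = s_α v` together with `ℓ(w) = ℓ(v) + 1`, lengths
being the cardinalities of inversion sets (`#Φ(u) = ℓ(u)`).

Claim: in a diamond `d ⋖ b = s_α d`, `d ⋖ c = s_β d`, `b ⋖ a = s_γ b`, `c ⋖ a = s_δ c`
with `b ≠ c` and labels `α, β, γ, δ` simple, one has `α = δ`, `β = γ`, and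
`s_α s_β = s_β s_α`.
-/

open scoped RealInnerProductSpace

variable {V : Type*} [NormedAddCommGroup V] [InnerProductSpace ℝ V] [FiniteDimensional ℝ V]

/-- The orthogonal reflection `s_β` in the hyperplane orthogonal to `β`. -/
noncomputable def rootReflection (β : V) : V ≃ₗᵢ[ℝ] V := Submodule.reflection ((ℝ ∙ β)ᗮ)

/-- The inversion set `Φ(u) = Φ⁺ ∩ u⁻¹(Φ⁻)` of `u`. -/
noncomputable def inversionSet [DecidableEq V] (Φplus : Finset V) (u : V ≃ₗᵢ[ℝ] V) :
    Finset V :=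
  Φplus.filter (fun β => -(u β) ∈ Φplus)

/-- `α` is a simple root for the positive system `Φ⁺`: it is a positive root which is not
the sum of two positive roots. -/
def IsSimpleRoot (Φplus : Finset V) (α : V) : Prop :=
  α ∈ Φplus ∧ ∀ β ∈ Φplus, ∀ γ ∈ Φplus, α ≠ β + γ

set_option linter.unusedSectionVars false

theorem rr_apply (β v : V) :
    rootReflection β v = v - (2 * ⟪β, v⟫ / ⟪β, β⟫) • β := by
  rcases eq_or_ne β 0 with h | h
  · subst h
    simp [rootReflection, Submodule.span_zero_singleton]
    exact Submodule.reflection_mem_subspace_eq_self Submodule.mem_top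
  rw [rootReflection, Submodule.reflection_orthogonal_apply, Submodule.reflection_singleton_apply]
  rw [real_inner_self_eq_norm_sq]
  have : (2:ℝ) * ⟪β, v⟫ / ‖β‖^2 = 2 • (⟪β,v⟫ / ‖β‖^2) := by
    simp [smul_eq_mul]; ring
  rw [this, neg_sub, smul_assoc]
  norm_cast

theorem rr_self (β : V) : rootReflection β β = -β :=
  Submodule.reflection_orthogonalComplement_singleton_eq_neg β

structure RootPack [DecidableEq V] (Φ Φplus : Finset V) : Prop where
  split : ∀ β : V, β ∈ Φ ↔ (β ∈ Φplus ∨ -β ∈ Φplus)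
  disj : ∀ β ∈ Φplus, -β ∉ Φplus
  closed : ∀ β ∈ Φplus, ∀ γ ∈ Φplus, β + γ ∈ Φ → β + γ ∈ Φplus
  reduced : ∀ β ∈ Φ, ∀ c : ℝ, c • β ∈ Φ → c = 1 ∨ c = -1
  crys : ∀ β ∈ Φ, ∀ γ ∈ Φ, ∃ n : ℤ, 2 * ⟪β, γ⟫ / ⟪γ, γ⟫ = (n : ℝ)
  stable : ∀ β ∈ Φ, ∀ γ ∈ Φ, rootReflection β γ ∈ Φ

namespace RootPack
variable [DecidableEq V] {Φ Φplus : Finset V} (h : RootPack Φ Φplus)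
include h

theorem plus_sub {β : V} (hβ : β ∈ Φplus) : β ∈ Φ := (h.split β).2 (Or.inl hβ)

theorem ne_zero {β : V} (hβ : β ∈ Φ) : β ≠ 0 := by
  rintro rfl
  rcases (h.split 0).1 hβ with h0 | h0 <;>
    exact h.disj 0 (by simpa using h0) (by simpa using h0)

theorem neg_mem {β : V} (hβ : β ∈ Φ) : -β ∈ Φ := by
  rw [h.split] at hβ ⊢
  simpa [or_comm] using hβ

theorem inner_self_pos {β : V} (hβ : β ∈ Φ) : 0 < ⟪β, β⟫ := by
  rw [real_inner_self_eq_norm_sq]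
  exact pow_pos (norm_pos_iff.2 (h.ne_zero hβ)) 2

theorem cartan {β γ : V} (hβ : β ∈ Φ) (hγ : γ ∈ Φ) :
    ∃ n : ℤ, 2 * ⟪β, γ⟫ = n * ⟪γ, γ⟫ ∧ rootReflection γ β = β - (n : ℝ) • γ := by
  obtain ⟨n, hn⟩ := h.crys β hβ γ hγ
  have hγγ : ⟪γ, γ⟫ ≠ 0 := (h.inner_self_pos hγ).ne'
  have hn' : 2 * ⟪β, γ⟫ = n * ⟪γ, γ⟫ := by
    field_simp at hn; linarith [hn]
  refine ⟨n, hn', ?_⟩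
  rw [rr_apply, real_inner_comm β γ, hn', mul_div_assoc, div_self hγγ, mul_one]

theorem cs {β γ : V} (hβ : β ∈ Φ) (hγ : γ ∈ Φ) (hpar : ∀ c : ℝ, β ≠ c • γ) :
    ⟪β, γ⟫ ^ 2 < ⟪β, β⟫ * ⟪γ, γ⟫ := by
  have hγn : ‖γ‖ ≠ 0 := norm_ne_zero_iff.2 (h.ne_zero hγ)
  have key : ∀ b : V, (∀ c : ℝ, b ≠ c • γ) → ⟪b, γ⟫ < ‖b‖ * ‖γ‖ := by
    intro b hb
    rw [inner_lt_norm_mul_iff_real]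
    intro hcon
    refine hb (‖b‖ / ‖γ‖) ?_
    have hthis : b = ‖γ‖⁻¹ • (‖b‖ • γ) := by rw [← hcon, inv_smul_smul₀ hγn]
    rw [div_eq_inv_mul, ← smul_smul]
    exact hthis
  have h1 : ⟪β, γ⟫ < ‖β‖ * ‖γ‖ := key β hpar
  have h2 : -⟪β, γ⟫ < ‖β‖ * ‖γ‖ := by
    have := key (-β) (fun c hc => hpar (-c) (by rw [neg_smul, ← hc, neg_neg]))
    rwa [inner_neg_left, norm_neg] at this
  rw [real_inner_self_eq_norm_sq, real_inner_self_eq_norm_sq]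
  nlinarith [h1, h2]

theorem diff_mem {β γ : V} (hβ : β ∈ Φ) (hγ : γ ∈ Φ) (hpar : ∀ c : ℝ, β ≠ c • γ)
    (hpos : 0 < ⟪β, γ⟫) : β - γ ∈ Φ := by
  obtain ⟨n, hn, hnr⟩ := h.cartan hβ hγ
  obtain ⟨m, hm, hmr⟩ := h.cartan hγ hβ
  have hγγ := h.inner_self_pos hγ
  have hββ := h.inner_self_pos hβ
  have hcs := h.cs hβ hγ hpar
  have hγβ : ⟪γ, β⟫ = ⟪β, γ⟫ := real_inner_comm β γ
  have hn1 : 1 ≤ n := by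
    have hr : (0:ℝ) < n := by nlinarith
    exact_mod_cast Int.cast_pos.mp (by exact_mod_cast hr)
  have hm1 : 1 ≤ m := by
    have hr : (0:ℝ) < m := by nlinarith
    exact_mod_cast Int.cast_pos.mp (by exact_mod_cast hr)
  have hprod : n * m < 4 := by
    have hmm : ((n * m : ℤ) : ℝ) * (⟪γ, γ⟫ * ⟪β, β⟫) < 4 * (⟪γ, γ⟫ * ⟪β, β⟫) := by
      push_cast
      nlinarith [mul_pos hγγ hββ]
    have := (mul_lt_mul_iff_of_pos_right (mul_pos hγγ hββ)).mp hmm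
    exact_mod_cast this
  have hcase : n = 1 ∨ m = 1 := by
    by_contra hne
    push_neg at hne
    have h2n : 2 ≤ n := by omega
    have h2m : 2 ≤ m := by omega
    nlinarith
  rcases hcase with rfl | rfl
  · have := h.stable γ hγ β hβ
    rw [hnr] at this
    simpa using this
  · have := h.stable β hβ γ hγ
    rw [hmr] at this
    have := h.neg_mem this
    simpa [neg_sub] using this

theorem sum_mem {β γ : V} (hβ : β ∈ Φ) (hγ : γ ∈ Φ) (hpar : ∀ c : ℝ, β ≠ c • γ)
    (hneg : ⟪β, γ⟫ < 0) : β + γ ∈ Φ := by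
  have h1 : β - (-γ) ∈ Φ := by
    refine h.diff_mem hβ (h.neg_mem hγ) (fun c hc => hpar (-c) (by rw [neg_smul, ← smul_neg, ← hc]))
      (by rw [inner_neg_right]; linarith)
  simpa [sub_neg_eq_add] using h1

theorem parallel_eq {β γ : V} {c : ℝ} (hβ : β ∈ Φplus) (hγ : γ ∈ Φplus) (hc : β = c • γ) :
    β = γ := by
  have hγΦ := h.plus_sub hγ
  rcases h.reduced γ hγΦ c (hc ▸ h.plus_sub hβ) with rfl | rfl
  · simpa using hc
  · exfalso
    apply h.disj γ hγ
    rw [neg_smul, one_smul] at hc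
    rw [← hc]
    exact hβ

theorem sub_simple {α x : V} (hα : IsSimpleRoot Φplus α) (hx : x ∈ Φplus)
    (hpar : ∀ c : ℝ, x ≠ c • α) (hpos : 0 < ⟪x, α⟫) : x - α ∈ Φplus := by
  have hΦ : x - α ∈ Φ := h.diff_mem (h.plus_sub hx) (h.plus_sub hα.1) hpar hpos
  rcases (h.split _).1 hΦ with h1 | h1
  · exact h1
  · exfalso
    rw [neg_sub] at h1
    exact hα.2 (α - x) h1 x hx (by abel)

theorem add_simple {α x : V} (hα : α ∈ Φplus) (hx : x ∈ Φplus)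
    (hpar : ∀ c : ℝ, x ≠ c • α) (hneg : ⟪x, α⟫ < 0) : x + α ∈ Φplus :=
  h.closed x hx α hα (h.sum_mem (h.plus_sub hx) (h.plus_sub hα) hpar hneg)

theorem simple_refl_mem {α β : V} (hα : IsSimpleRoot Φplus α) (hβm : β ∈ Φplus)
    (hne : β ≠ α) : rootReflection α β ∈ Φplus := by
  have hαm := hα.1
  have hαΦ := h.plus_sub hαm
  have hβΦ := h.plus_sub hβm
  have haa := h.inner_self_pos hαΦ
  have hbb := h.inner_self_pos hβΦ
  have hpar : ∀ c : ℝ, β ≠ c • α := fun c hc => hne (h.parallel_eq hβm hαm hc)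
  obtain ⟨n, hβα, hnr⟩ := h.cartan hβΦ hαΦ
  rw [hnr]
  by_contra hneg
  have hsΦ : β - (n:ℝ) • α ∈ Φ := hnr ▸ h.stable α hαΦ β hβΦ
  have hγm : (n:ℝ) • α - β ∈ Φplus := by
    rcases (h.split _).1 hsΦ with h1 | h1
    · exact absurd h1 hneg
    · rwa [neg_sub] at h1
  set γ := (n:ℝ) • α - β with hγdef
  have hγΦ : γ ∈ Φ := h.plus_sub hγm
  have hγpar : ∀ c : ℝ, γ ≠ c • α := by
    intro c hc
    apply hpar ((n:ℝ) - c)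
    have hβeq : β = (n:ℝ) • α - γ := by rw [hγdef]; abel
    rw [hβeq, hc, ← sub_smul]
  have hγα : 2 * ⟪γ, α⟫ = n * ⟪α, α⟫ := by
    rw [hγdef, inner_sub_left, real_inner_smul_left]
    linarith
  obtain ⟨m, hm2, hmr⟩ := h.cartan hαΦ hβΦ
  have hcs := h.cs hβΦ hαΦ hpar
  have hαβc : ⟪α, β⟫ = ⟪β, α⟫ := real_inner_comm β α
  rw [hαβc] at hm2
  have hnmlt : n * m < 4 := by
    have hprod : 4 * ⟪β, α⟫ ^ 2 = (n : ℝ) * m * (⟪α, α⟫ * ⟪β, β⟫) := by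
      rw [show (4:ℝ) * ⟪β, α⟫ ^ 2 = (2 * ⟪β, α⟫) * (2 * ⟪β, α⟫) by ring]
      nth_rewrite 1 [hβα]
      rw [hm2]; ring
    have hx : ((n * m : ℤ) : ℝ) * (⟪α, α⟫ * ⟪β, β⟫) < 4 * (⟪α, α⟫ * ⟪β, β⟫) := by
      push_cast
      nlinarith [mul_pos haa hbb, hcs, hprod]
    exact_mod_cast (mul_lt_mul_iff_of_pos_right (mul_pos haa hbb)).mp hx
  have hsignp : 0 < n → 0 < m := by
    intro hx
    have hnr' : (0:ℝ) < (n:ℝ) := by exact_mod_cast hx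
    have hmr' : (0:ℝ) < (m:ℝ) := by nlinarith
    exact_mod_cast hmr'
  have hsignn : n < 0 → m < 0 := by
    intro hx
    have hnr' : (n:ℝ) < 0 := by exact_mod_cast hx
    have hmr' : (m:ℝ) < 0 := by nlinarith
    exact_mod_cast hmr'
  have hl : -3 ≤ n := by
    by_contra hcon
    push_neg at hcon
    have hm' : m < 0 := hsignn (by omega)
    nlinarith
  have hr : n ≤ 3 := by
    by_contra hcon
    push_neg at hcon
    have hm' : 0 < m := hsignp (by omega)
    nlinarith
  have hb1par : ∀ c : ℝ, β + α ≠ c • α :=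
    fun c hc => hpar (c - 1) (by rw [sub_smul, one_smul, ← hc]; abel)
  have hg1par : ∀ c : ℝ, γ + α ≠ c • α :=
    fun c hc => hγpar (c - 1) (by rw [sub_smul, one_smul, ← hc]; abel)
  clear hnr hmr hsΦ hγΦ hcs hnmlt hsignp hsignn hm2
  interval_cases n <;> push_cast at hβα hγα hγdef
  · -- n = -3
    have hb1 : β + α ∈ Φplus := h.add_simple hαm hβm hpar (by nlinarith)
    have hg1 : γ + α ∈ Φplus := h.add_simple hαm hγm hγpar (by nlinarith)
    have hb2 : β + α + α ∈ Φplus :=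
      h.add_simple hαm hb1 hb1par (by rw [inner_add_left]; nlinarith)
    have hg2 : γ + α + α ∈ Φplus :=
      h.add_simple hαm hg1 hg1par (by rw [inner_add_left]; nlinarith)
    exact hα.2 _ hb2 _ hg2 (by rw [hγdef]; module)
  · -- n = -2
    have hb1 : β + α ∈ Φplus := h.add_simple hαm hβm hpar (by nlinarith)
    have hg1 : γ + α ∈ Φplus := h.add_simple hαm hγm hγpar (by nlinarith)
    exact h.disj (β + α) hb1 (by rw [show -(β + α) = γ + α by rw [hγdef]; module]; exact hg1)
  · -- n = -1
    have hb1 : β + α ∈ Φplus := h.add_simple hαm hβm hpar (by nlinarith)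
    have hg1 : γ + α ∈ Φplus := h.add_simple hαm hγm hγpar (by nlinarith)
    exact hα.2 _ hb1 _ hg1 (by rw [hγdef]; module)
  · -- n = 0
    exact h.disj β hβm (by rw [show -β = γ by rw [hγdef]; module]; exact hγm)
  · -- n = 1
    exact hα.2 _ hβm _ hγm (by rw [hγdef]; module)
  · -- n = 2
    have hg1 : γ - α ∈ Φplus := h.sub_simple hα hγm hγpar (by nlinarith)
    exact hα.2 _ hg1 _ hβm (by rw [hγdef]; module)
  · -- n = 3
    have hg1 : γ - α ∈ Φplus := h.sub_simple hα hγm hγpar (by nlinarith)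
    have hg1par : ∀ c : ℝ, γ - α ≠ c • α :=
      fun c hc => hγpar (c + 1) (by rw [add_smul, one_smul, ← hc]; abel)
    have hg2 : γ - α - α ∈ Φplus :=
      h.sub_simple hα hg1 hg1par (by rw [inner_sub_left]; nlinarith)
    exact hα.2 _ hg2 _ hβm (by rw [hγdef]; module)

theorem neg_refl_mem_iff {α q : V} (hα : IsSimpleRoot Φplus α) (hq : q ∈ Φ) :
    -(rootReflection α q) ∈ Φplus ↔ (q = α ∨ (-q ∈ Φplus ∧ q ≠ -α)) := by
  have hα0 : α ≠ 0 := h.ne_zero (h.plus_sub hα.1)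
  have hne2 : -α ≠ α := by
    intro hh
    apply hα0
    have h2 : α + α = 0 := by nth_rewrite 1 [← hh]; simp
    have h2' : (2:ℝ) • α = 0 := by rw [two_smul]; exact h2
    exact (smul_eq_zero.mp h2').resolve_left (by norm_num)
  by_cases hqp : q ∈ Φplus
  · by_cases hqα : q = α
    · subst hqα
      simp [rr_self, hqp]
    · have hpos := h.simple_refl_mem hα hqp hqα
      constructor
      · intro hcon
        exact absurd hcon (h.disj _ hpos)
      · rintro (rfl | ⟨hnq, _⟩)
        · exact absurd rfl hqα
        · exact absurd hnq (h.disj q hqp)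
  · have hnq : -q ∈ Φplus := ((h.split q).1 hq).resolve_left hqp
    by_cases hqα : q = -α
    · constructor
      · intro hcon
        exfalso
        rw [hqα, map_neg, rr_self, neg_neg] at hcon
        exact h.disj α hα.1 hcon
      · rintro (hc | ⟨_, hne⟩)
        · exact absurd (hqα ▸ hc) hne2
        · exact absurd hqα hne
    · have hne' : -q ≠ α := fun hc => hqα (by rw [← hc, neg_neg])
      have hmem := h.simple_refl_mem hα hnq hne'
      rw [map_neg] at hmem
      exact ⟨fun _ => Or.inr ⟨hnq, hqα⟩, fun _ => hmem⟩

theorem weyl_stab {u : V ≃ₗᵢ[ℝ] V}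
    (hu : u ∈ Subgroup.closure {g : V ≃ₗᵢ[ℝ] V | ∃ β ∈ Φ, g = rootReflection β}) :
    ∀ v ∈ Φ, u v ∈ Φ ∧ u⁻¹ v ∈ Φ := by
  induction hu using Subgroup.closure_induction with
  | mem x hx =>
    obtain ⟨β, hβ, rfl⟩ := hx
    intro v hv
    refine ⟨h.stable β hβ v hv, ?_⟩
    have hinv : (rootReflection β)⁻¹ = rootReflection β := by
      rw [LinearIsometryEquiv.inv_def, rootReflection, Submodule.reflection_symm]
    rw [hinv]
    exact h.stable β hβ v hv
  | one => intro v hv; simpa using hv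
  | mul x y hx hy ihx ihy =>
    intro v hv
    constructor
    · have : (x * y) v = x (y v) := rfl
      rw [this]
      exact (ihx _ ((ihy v hv).1)).1
    · have : (x * y)⁻¹ v = y⁻¹ (x⁻¹ v) := by rw [mul_inv_rev]; rfl
      rw [this]
      exact (ihy _ ((ihx v hv).2)).2
  | inv x hx ih =>
    intro v hv
    refine ⟨(ih v hv).2, ?_⟩
    rw [inv_inv]
    exact (ih v hv).1

theorem inv_step {α : V} (hα : IsSimpleRoot Φplus α) {u : V ≃ₗᵢ[ℝ] V}
    (hu : ∀ v ∈ Φ, u v ∈ Φ ∧ u⁻¹ v ∈ Φ)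
    (hcard : (inversionSet Φplus (rootReflection α * u)).card
      = (inversionSet Φplus u).card + 1) :
    u⁻¹ α ∈ Φplus ∧ u⁻¹ α ∉ inversionSet Φplus u ∧
      inversionSet Φplus (rootReflection α * u) = insert (u⁻¹ α) (inversionSet Φplus u) := by
  have hαΦ : α ∈ Φ := h.plus_sub hα.1
  have huA : u (u⁻¹ α) = α := by simp
  have huApp : ∀ p, (rootReflection α * u) p = rootReflection α (u p) := fun p => rfl
  have hmem : ∀ p, p ∈ inversionSet Φplus u ↔ (p ∈ Φplus ∧ -(u p) ∈ Φplus) := by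
    intro p; simp [inversionSet]
  have hmemw : ∀ p, p ∈ inversionSet Φplus (rootReflection α * u) ↔
      (p ∈ Φplus ∧ -(rootReflection α (u p)) ∈ Φplus) := by
    intro p; simp [inversionSet, huApp]
  have hAΦ : u⁻¹ α ∈ Φ := (hu α hαΦ).2
  rcases (h.split _).1 hAΦ with hA | hA
  · refine ⟨hA, ?_, ?_⟩
    · rw [hmem]
      rintro ⟨-, hcon⟩
      rw [huA] at hcon
      exact h.disj α hα.1 hcon
    · ext p
      rw [hmemw, Finset.mem_insert, hmem]
      constructor
      · rintro ⟨hp, hneg⟩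
        have hupΦ : u p ∈ Φ := (hu p (h.plus_sub hp)).1
        rcases (h.neg_refl_mem_iff hα hupΦ).1 hneg with h1 | ⟨h1, h2⟩
        · left; apply u.injective; rw [huA, h1]
        · right; exact ⟨hp, h1⟩
      · rintro (rfl | ⟨hp, hneg⟩)
        · refine ⟨hA, ?_⟩
          rw [huA, rr_self, neg_neg]
          exact hα.1
        · have hupΦ : u p ∈ Φ := (hu p (h.plus_sub hp)).1
          refine ⟨hp, (h.neg_refl_mem_iff hα hupΦ).2 (Or.inr ⟨hneg, ?_⟩)⟩
          intro hcon
          have hpA : p = -(u⁻¹ α) := by apply u.injective; rw [hcon, map_neg, huA]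
          rw [hpA] at hp
          exact h.disj _ hA hp
  · exfalso
    have hAp : u⁻¹ α ∉ Φplus := fun hc => h.disj _ hc hA
    have heq : inversionSet Φplus (rootReflection α * u)
        = (inversionSet Φplus u).erase (-(u⁻¹ α)) := by
      ext p
      rw [hmemw, Finset.mem_erase, hmem]
      constructor
      · rintro ⟨hp, hneg⟩
        have hupΦ : u p ∈ Φ := (hu p (h.plus_sub hp)).1
        rcases (h.neg_refl_mem_iff hα hupΦ).1 hneg with h1 | ⟨h1, h2⟩
        · exfalso
          have hpA : p = u⁻¹ α := by apply u.injective; rw [huA, h1]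
          rw [hpA] at hp
          exact hAp hp
        · refine ⟨?_, hp, h1⟩
          intro hcon
          apply h2
          rw [hcon, map_neg, huA]
      · rintro ⟨hne, hp, hneg⟩
        have hupΦ : u p ∈ Φ := (hu p (h.plus_sub hp)).1
        refine ⟨hp, (h.neg_refl_mem_iff hα hupΦ).2 (Or.inr ⟨hneg, ?_⟩)⟩
        intro hcon
        apply hne
        apply u.injective
        rw [hcon, map_neg, huA]
    have hmemA : -(u⁻¹ α) ∈ inversionSet Φplus u := by
      rw [hmem]
      exact ⟨hA, by rw [map_neg, huA, neg_neg]; exact hα.1⟩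
    rw [heq, Finset.card_erase_of_mem hmemA] at hcard
    have hpos := Finset.card_pos.mpr ⟨_, hmemA⟩
    omega

end RootPack

theorem statement1 [DecidableEq V] (Φ Φplus : Finset V)
    (hsplit : ∀ β : V, β ∈ Φ ↔ (β ∈ Φplus ∨ -β ∈ Φplus))
    (hdisj : ∀ β ∈ Φplus, -β ∉ Φplus)
    (hclosed : ∀ β ∈ Φplus, ∀ γ ∈ Φplus, β + γ ∈ Φ → β + γ ∈ Φplus)
    (hreduced : ∀ β ∈ Φ, ∀ c : ℝ, c • β ∈ Φ → c = 1 ∨ c = -1)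
    (hcrys : ∀ β ∈ Φ, ∀ γ ∈ Φ, ∃ n : ℤ, 2 * ⟪β, γ⟫ / ⟪γ, γ⟫ = (n : ℝ))
    (hstable : ∀ β ∈ Φ, ∀ γ ∈ Φ, rootReflection β γ ∈ Φ)
    -- the four vertices of the diamond lie in the Weyl group:
    (a b c d : V ≃ₗᵢ[ℝ] V)
    (hd : d ∈ Subgroup.closure {g : V ≃ₗᵢ[ℝ] V | ∃ β ∈ Φ, g = rootReflection β})
    -- the labels are simple roots:
    (α β γ δ : V)
    (hα : IsSimpleRoot Φplus α) (hβ : IsSimpleRoot Φplus β)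
    (hγ : IsSimpleRoot Φplus γ) (hδ : IsSimpleRoot Φplus δ)
    -- the four weak covering relations, with each step increasing length by one:
    (hb : b = rootReflection α * d)
    (hlb : (inversionSet Φplus b).card = (inversionSet Φplus d).card + 1)
    (hc : c = rootReflection β * d)
    (hlc : (inversionSet Φplus c).card = (inversionSet Φplus d).card + 1)
    (ha1 : a = rootReflection γ * b)
    (hla1 : (inversionSet Φplus a).card = (inversionSet Φplus b).card + 1)
    (ha2 : a = rootReflection δ * c)
    (hla2 : (inversionSet Φplus a).card = (inversionSet Φplus c).card + 1)
    (hbc : b ≠ c) :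
    α = δ ∧ β = γ ∧
      rootReflection α * rootReflection β = rootReflection β * rootReflection α := by
  have h : RootPack Φ Φplus := ⟨hsplit, hdisj, hclosed, hreduced, hcrys, hstable⟩
  have hαΦ := h.plus_sub hα.1
  have hβΦ := h.plus_sub hβ.1
  have hgen : ∀ ρ : V, ρ ∈ Φ → rootReflection ρ ∈
      Subgroup.closure {g : V ≃ₗᵢ[ℝ] V | ∃ β ∈ Φ, g = rootReflection β} :=
    fun ρ hρ => Subgroup.subset_closure ⟨ρ, hρ, rfl⟩
  have hbmem : b ∈ Subgroup.closure {g : V ≃ₗᵢ[ℝ] V | ∃ β ∈ Φ, g = rootReflection β} := by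
    rw [hb]; exact mul_mem (hgen α hαΦ) hd
  have hcmem : c ∈ Subgroup.closure {g : V ≃ₗᵢ[ℝ] V | ∃ β ∈ Φ, g = rootReflection β} := by
    rw [hc]; exact mul_mem (hgen β hβΦ) hd
  have hds := h.weyl_stab hd
  have hbs := h.weyl_stab hbmem
  have hcs' := h.weyl_stab hcmem
  rw [hb] at hlb
  obtain ⟨hxαp, hxαnot, hIb⟩ := h.inv_step hα hds hlb
  rw [hc] at hlc
  obtain ⟨hxβp, hxβnot, hIc⟩ := h.inv_step hβ hds hlc
  rw [ha1] at hla1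
  obtain ⟨hyγp, hyγnot, hIa1⟩ := h.inv_step hγ hbs hla1
  rw [ha2] at hla2
  obtain ⟨hyδp, hyδnot, hIa2⟩ := h.inv_step hδ hcs' hla2
  rw [← hb] at hIb
  rw [← hc] at hIc
  rw [← ha1] at hIa1
  rw [← ha2] at hIa2
  have hαβ : α ≠ β := by rintro rfl; exact hbc (hb.trans hc.symm)
  have hxne : d⁻¹ α ≠ d⁻¹ β := fun hcon => hαβ (by simpa using congrArg d hcon)
  have hIa12 : insert (b⁻¹ γ) (insert (d⁻¹ α) (inversionSet Φplus d))
      = insert (c⁻¹ δ) (insert (d⁻¹ β) (inversionSet Φplus d)) := by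
    rw [← hIb, ← hIc, ← hIa1, ← hIa2]
  have hyγ_eq : b⁻¹ γ = d⁻¹ β := by
    have hin : d⁻¹ β ∈ insert (b⁻¹ γ) (insert (d⁻¹ α) (inversionSet Φplus d)) := by
      rw [hIa12]; simp
    rcases Finset.mem_insert.1 hin with h1 | h1
    · exact h1.symm
    rcases Finset.mem_insert.1 h1 with h2 | h2
    · exact absurd h2.symm hxne
    · exact absurd h2 hxβnot
  have hyδ_eq : c⁻¹ δ = d⁻¹ α := by
    have hin : d⁻¹ α ∈ insert (c⁻¹ δ) (insert (d⁻¹ β) (inversionSet Φplus d)) := by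
      rw [← hIa12]; simp
    rcases Finset.mem_insert.1 hin with h1 | h1
    · exact h1.symm
    rcases Finset.mem_insert.1 h1 with h2 | h2
    · exact absurd h2 hxne
    · exact absurd h2 hxαnot
  have hγβ : γ = rootReflection α β :=
    calc γ = b (b⁻¹ γ) := by simp
    _ = b (d⁻¹ β) := by rw [hyγ_eq]
    _ = rootReflection α (d (d⁻¹ β)) := by rw [hb]; rfl
    _ = rootReflection α β := by rw [show d (d⁻¹ β) = β by simp]
  have hδα : δ = rootReflection β α :=
    calc δ = c (c⁻¹ δ) := by simp
    _ = c (d⁻¹ α) := by rw [hyδ_eq]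
    _ = rootReflection β (d (d⁻¹ α)) := by rw [hc]; rfl
    _ = rootReflection β α := by rw [show d (d⁻¹ α) = α by simp]
  obtain ⟨n, hn2, hnr⟩ := h.cartan hβΦ hαΦ
  have hγeq : γ = β - (n : ℝ) • α := by rw [hγβ, hnr]
  have haa := h.inner_self_pos hαΦ
  have hbb := h.inner_self_pos hβΦ
  have hparβα : ∀ cc : ℝ, β ≠ cc • α := fun cc hcn => hαβ (h.parallel_eq hβ.1 hα.1 hcn).symm
  have hn0 : n = 0 := by
    rcases lt_trichotomy n 0 with hlt | he | hgt
    · exfalso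
      have hnle : (n : ℝ) ≤ -1 := by exact_mod_cast Int.le_sub_one_of_lt hlt
      have hγα : 0 < ⟪γ, α⟫ := by
        rw [hγeq, inner_sub_left, real_inner_smul_left]
        nlinarith
      have hparγα : ∀ cc : ℝ, γ ≠ cc • α := by
        intro cc hcn
        apply hparβα ((n : ℝ) + cc)
        have hβe : β = (n : ℝ) • α + γ := by rw [hγeq]; abel
        rw [hβe, hcn, ← add_smul]
      have hsub : γ - α ∈ Φplus := h.sub_simple hα hγ.1 hparγα hγα
      exact hγ.2 _ hsub _ hα.1 (by abel)
    · exact he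
    · exfalso
      have hnge : (1 : ℝ) ≤ (n : ℝ) := by exact_mod_cast hgt
      have hβα : 0 < ⟪β, α⟫ := by nlinarith
      have hsub : β - α ∈ Φplus := h.sub_simple hα hβ.1 hparβα hβα
      exact hβ.2 _ hsub _ hα.1 (by abel)
  have hba0 : ⟪β, α⟫ = 0 := by
    rw [hn0] at hn2; push_cast at hn2; linarith
  have hab0 : ⟪α, β⟫ = 0 := by rw [real_inner_comm β α, hba0]
  have hγ_eq_β : γ = β := by rw [hγeq, hn0]; simp
  obtain ⟨m, hm2, hmr⟩ := h.cartan hαΦ hβΦ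
  have hm0 : (m : ℝ) = 0 := by
    rw [hab0, mul_zero] at hm2
    rcases mul_eq_zero.1 hm2.symm with h1 | h1
    · exact h1
    · exact absurd h1 hbb.ne'
  have hδ_eq_α : δ = α := by rw [hδα, hmr, hm0]; simp
  refine ⟨hδ_eq_α.symm, hγ_eq_β.symm, ?_⟩
  have key : ∀ x y : V, ⟪x, y⟫ = 0 → ∀ v,
      rootReflection x (rootReflection y v)
        = v - (2 * ⟪y, v⟫ / ⟪y, y⟫) • y - (2 * ⟪x, v⟫ / ⟪x, x⟫) • x := by
    intro x y hxy v
    rw [rr_apply y v, rr_apply x, inner_sub_right, real_inner_smul_right, hxy, mul_zero]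
    module
  apply LinearIsometryEquiv.ext
  intro v
  show rootReflection α (rootReflection β v) = rootReflection β (rootReflection α v)
  rw [key α β hab0 v, key β α hba0 v]
  abel
end

section
/- Let W be a Weyl group, w ∈ W, α a simple root, γ a positive root with s_α w ≠ w s_γ. Assume ℓ(w s_γ) = ℓ(w) + 1 and ℓ(s_α w) = ℓ(w) + 1 (so that w s_γ and s_α w both cover w, the first in strong Bruhat order, the second in left weak order). Then ℓ(s_α w s_γ) = ℓ(w) + 2, and s_α w s_γ covers both w s_γ (in left weak order, via s_α) and s_α w (in strong Bruhat order, via right multiplication by s_γ). -/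
open CoxeterSystem

namespace Statement2Aux

/-- The group `(ZMod 2)^W`, written multiplicatively. -/
abbrev G (W : Type*) := W → Multiplicative (ZMod 2)

lemma m2_mul_self (a : Multiplicative (ZMod 2)) : a * a = 1 := by
  revert a; decide

lemma m2_eq_of_mul_eq_one {a b : Multiplicative (ZMod 2)} (h : a * b = 1) : a = b := by
  revert a b; decide

lemma g_mul_self {W : Type*} (g : G W) : g * g = 1 := by
  funext x
  exact m2_mul_self (g x)

/-- `W` acts on `(ZMod 2)^W` by (inverse) conjugation on the coordinates. -/
def conjAct (W : Type*) [Group W] : W →* MulAut (G W) where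
  toFun u :=
    { toFun := fun f x => f (u⁻¹ * x * u)
      invFun := fun f x => f (u * x * u⁻¹)
      left_inv := by intro f; funext x; simp [mul_assoc]
      right_inv := by intro f; funext x; simp [mul_assoc]
      map_mul' := by intro f g; rfl }
  map_one' := by
    ext f x
    simp
  map_mul' := by
    intro u v
    ext f x
    show f ((u * v)⁻¹ * x * (u * v)) = f (v⁻¹ * (u⁻¹ * x * u) * v)
    congr 1
    group

lemma conjAct_apply {W : Type*} [Group W] (u : W) (f : G W) (x : W) :
    conjAct W u f x = f (u⁻¹ * x * u) := rfl

open scoped Classical in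
/-- The indicator function of `w₀`. -/
noncomputable def delta {W : Type*} (w₀ : W) : G W :=
  fun x => if x = w₀ then Multiplicative.ofAdd 1 else 1

lemma conjAct_delta {W : Type*} [Group W] (u w₀ : W) :
    conjAct W u (delta w₀) = delta (u * w₀ * u⁻¹) := by
  funext x
  show delta w₀ (u⁻¹ * x * u) = delta (u * w₀ * u⁻¹) x
  unfold delta
  congr 1
  simp only [eq_iff_iff]
  constructor
  · intro h
    rw [← h]
    group
  · intro h
    rw [h]
    group

lemma delta_self {W : Type*} (w₀ : W) : delta w₀ w₀ = Multiplicative.ofAdd 1 := by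
  simp [delta]

lemma delta_ne_one_iff {W : Type*} {w₀ x : W} : delta w₀ x ≠ 1 ↔ x = w₀ := by
  have h : (Multiplicative.ofAdd (1 : ZMod 2)) ≠ 1 := by decide
  unfold delta
  by_cases hx : x = w₀ <;> simp [hx, h]

/-- A general conjugation computation in a group. -/
lemma conj_pow_general {H : Type*} [Group H] {g p : H} (hg : g * g = 1) (hc : g * p * g = p⁻¹)
    (m k : ℕ) : p ^ m * (p ^ k * g) * (p ^ m)⁻¹ = p ^ (2 * m + k) * g := by
  have hgp : ∀ n : ℕ, g * (p ^ n)⁻¹ = p ^ n * g := by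
    intro n
    induction n with
    | zero => simp
    | succ n ih =>
      have h1 : g * p⁻¹ = p * g := by
        rw [← hc, ← mul_assoc, ← mul_assoc, hg, one_mul]
      calc g * (p ^ (n + 1))⁻¹ = g * (p⁻¹ * (p ^ n)⁻¹) := by rw [pow_succ, mul_inv_rev]
        _ = (g * p⁻¹) * (p ^ n)⁻¹ := by rw [mul_assoc]
        _ = p * (g * (p ^ n)⁻¹) := by rw [h1, mul_assoc]
        _ = p * (p ^ n * g) := by rw [ih]
        _ = p ^ (n + 1) * g := by rw [← mul_assoc, ← pow_succ']
  calc p ^ m * (p ^ k * g) * (p ^ m)⁻¹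
      = p ^ m * p ^ k * (g * (p ^ m)⁻¹) := by group
    _ = p ^ m * p ^ k * (p ^ m * g) := by rw [hgp]
    _ = p ^ (m + k) * (p ^ m * g) := by rw [← pow_add]
    _ = p ^ (m + k) * p ^ m * g := by rw [mul_assoc]
    _ = p ^ (m + k + m) * g := by rw [← pow_add]
    _ = p ^ (2 * m + k) * g := by rw [show m + k + m = 2 * m + k by ring]

variable {B : Type*} {W : Type*} [Group W] {M : CoxeterMatrix B} (cs : CoxeterSystem M W)

/-- The generators of the semidirect product. -/
noncomputable def gs (i : B) : (G W) ⋊[conjAct W] W :=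
  ⟨delta (cs.simple i), cs.simple i⟩

lemma gs_prod_right (i j : B) (n : ℕ) :
    ((gs cs i * gs cs j) ^ n).right = (cs.simple i * cs.simple j) ^ n := by
  induction n with
  | zero => simp
  | succ n ih =>
    rw [pow_succ, SemidirectProduct.mul_right, ih, pow_succ]
    rfl

lemma gs_conj_self (i j : B) :
    cs.simple i * (cs.simple i * cs.simple j) * cs.simple i
      = (cs.simple i * cs.simple j)⁻¹ := by
  rw [mul_inv_rev, inv_simple, inv_simple, ← mul_assoc, cs.simple_mul_simple_self, one_mul]

lemma gs_prod_left (i j : B) (n : ℕ) :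
    ((gs cs i * gs cs j) ^ n).left
      = ∏ k ∈ Finset.range (2 * n), delta ((cs.simple i * cs.simple j) ^ k * cs.simple i) := by
  have hg : cs.simple i * cs.simple i = 1 := cs.simple_mul_simple_self i
  have hc := gs_conj_self cs i j
  induction n with
  | zero => simp
  | succ n ih =>
    rw [pow_succ, SemidirectProduct.mul_left, ih, gs_prod_right]
    have hX : (gs cs i * gs cs j).left
        = delta (cs.simple i) * delta (cs.simple i * cs.simple j * cs.simple i) := by
      show delta (cs.simple i) * conjAct W (cs.simple i) (delta (cs.simple j)) = _
      rw [conjAct_delta, inv_simple]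
    rw [hX, map_mul, conjAct_delta, conjAct_delta]
    have cA := conj_pow_general hg hc n 0
    rw [pow_zero, one_mul, Nat.add_zero] at cA
    have cB := conj_pow_general hg hc n 1
    rw [pow_one] at cB
    rw [cA, cB]
    rw [show 2 * (n + 1) = 2 * n + 1 + 1 by ring, Finset.prod_range_succ,
      Finset.prod_range_succ, mul_assoc]

lemma gs_liftable : M.IsLiftable (gs cs) := by
  intro i j
  have h1 : ((gs cs i * gs cs j) ^ M i j).right = 1 := by
    rw [gs_prod_right]
    exact cs.simple_mul_simple_pow i j
  have h2 : ((gs cs i * gs cs j) ^ M i j).left = 1 := by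
    rw [gs_prod_left]
    rw [show 2 * M i j = M i j + M i j by ring, Finset.prod_range_add]
    have hper : ∀ k, delta ((cs.simple i * cs.simple j) ^ (M i j + k) * cs.simple i)
        = delta ((cs.simple i * cs.simple j) ^ k * cs.simple i) := by
      intro k
      rw [pow_add, cs.simple_mul_simple_pow i j, one_mul]
    simp only [hper]
    exact g_mul_self _
  have hX := SemidirectProduct.inl_left_mul_inr_right ((gs cs i * gs cs j) ^ M i j)
  rw [← hX, h1, h2]
  simp

/-- The reflection cocycle, packaged as a homomorphism into the semidirect product. -/
noncomputable def Phi : W →* (G W) ⋊[conjAct W] W :=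
  cs.lift ⟨gs cs, gs_liftable cs⟩

lemma Phi_simple (i : B) : Phi cs (cs.simple i) = gs cs i :=
  cs.lift_apply_simple (gs_liftable cs) i

lemma Phi_right (w : W) : (Phi cs w).right = w := by
  have h : SemidirectProduct.rightHom.comp (Phi cs) = MonoidHom.id W := by
    apply cs.ext_simple
    intro i
    rw [MonoidHom.comp_apply, Phi_simple]
    rfl
  calc (Phi cs w).right = (SemidirectProduct.rightHom.comp (Phi cs)) w := rfl
    _ = w := by rw [h]; rfl

/-- The reflection cocycle `N`. -/
noncomputable def Nf (w : W) : G W := (Phi cs w).left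

lemma Nf_one (x : W) : Nf cs (1 : W) x = 1 := by
  unfold Nf
  rw [map_one]
  rfl

lemma Nf_simple (i : B) : Nf cs (cs.simple i) = delta (cs.simple i) := by
  unfold Nf
  rw [Phi_simple]
  rfl

lemma Nf_mul (u v x : W) : Nf cs (u * v) x = Nf cs u x * Nf cs v (u⁻¹ * x * u) := by
  have h : (Phi cs (u * v)).left = (Phi cs u).left * conjAct W u ((Phi cs v).left) := by
    rw [map_mul, SemidirectProduct.mul_left, Phi_right]
  exact congrFun h x

lemma Nf_inv (w x : W) : Nf cs w⁻¹ x = Nf cs w (w * x * w⁻¹) := by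
  have h := Nf_mul cs w⁻¹ w x
  rw [inv_mul_cancel, inv_inv, Nf_one] at h
  exact m2_eq_of_mul_eq_one h.symm

lemma mem_leftInvSeq_of_Nf_ne_one (ω : List B) (x : W) (h : Nf cs (cs.wordProd ω) x ≠ 1) :
    x ∈ cs.leftInvSeq ω := by
  induction ω generalizing x with
  | nil =>
    exfalso
    apply h
    rw [wordProd_nil, Nf_one]
  | cons i ω ih =>
    rw [wordProd_cons, Nf_mul, inv_simple] at h
    show x ∈ cs.simple i :: List.map (MulAut.conj (cs.simple i)) (cs.leftInvSeq ω)
    by_cases h1 : Nf cs (cs.wordProd ω) (cs.simple i * x * cs.simple i) = 1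
    · rw [h1, mul_one, Nf_simple] at h
      rw [delta_ne_one_iff.mp h]
      exact List.mem_cons_self
    · have hx := ih _ h1
      apply List.mem_cons_of_mem
      rw [List.mem_map]
      refine ⟨cs.simple i * x * cs.simple i, hx, ?_⟩
      rw [MulAut.conj_apply, inv_simple, ← mul_assoc, ← mul_assoc,
        cs.simple_mul_simple_self, one_mul, mul_assoc, cs.simple_mul_simple_self, mul_one]

lemma length_lt_of_Nf_ne_one (w x : W) (h : Nf cs w x ≠ 1) :
    cs.length (x * w) < cs.length w := by
  obtain ⟨ω, hred, rfl⟩ := cs.exists_reduced_word' w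
  exact (cs.isLeftInversion_of_mem_leftInvSeq hred
    (mem_leftInvSeq_of_Nf_ne_one cs ω x h)).2

lemma Nf_refl_self {t : W} (ht : cs.IsReflection t) : Nf cs t t = Multiplicative.ofAdd 1 := by
  obtain ⟨v, i, rfl⟩ := ht
  set t := v * cs.simple i * v⁻¹ with htdef
  have h1 : t = v * (cs.simple i * v⁻¹) := by rw [htdef, mul_assoc]
  have h2 : v⁻¹ * t * v = cs.simple i := by rw [htdef]; group
  nth_rewrite 1 [h1]
  rw [Nf_mul, h2, Nf_mul, inv_simple, Nf_simple, delta_self]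
  have h3 : cs.simple i * cs.simple i * cs.simple i = cs.simple i := by
    rw [cs.simple_mul_simple_self, one_mul]
  rw [h3, Nf_inv, ← htdef]
  generalize Nf cs v t = a
  revert a; decide

lemma Nf_ne_one_of_isLeftInversion {w t : W} (ht : cs.IsReflection t)
    (h : cs.length (t * w) < cs.length w) : Nf cs w t ≠ 1 := by
  intro hcon
  have h1 : Nf cs (t * w) t = Multiplicative.ofAdd 1 := by
    rw [Nf_mul, ht.inv]
    have h0 : t * t * t = t := by rw [ht.mul_self, one_mul]
    rw [h0, hcon, mul_one, Nf_refl_self cs ht]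
  have h2 : Nf cs (t * w) t ≠ 1 := by
    rw [h1]; decide
  have h3 := length_lt_of_Nf_ne_one cs (t * w) t h2
  rw [← mul_assoc, ht.mul_self, one_mul] at h3
  omega

/-- Key lemma: the lifting property for covers. -/
lemma key_lemma {w t : W} {i : B} (ht : cs.IsReflection t)
    (hstrong : cs.length (w * t) = cs.length w + 1)
    (hweak : cs.length (cs.simple i * w) = cs.length w + 1)
    (hdown : cs.length (cs.simple i * w * t) = cs.length w) :
    cs.simple i * w = w * t := by
  set u := cs.simple i * w with hu
  set t' := u * t * u⁻¹ with ht'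
  have ht'refl : cs.IsReflection t' := ht.conj u
  have h2 : cs.length (t' * u) < cs.length u := by
    have e : t' * u = u * t := by rw [ht']; group
    rw [e, hdown, hweak]
    omega
  have h3 := Nf_ne_one_of_isLeftInversion cs ht'refl h2
  rw [hu, Nf_mul, inv_simple] at h3
  have h5 : cs.simple i * t' * cs.simple i = w * t * w⁻¹ := by
    rw [ht', hu]
    simp [mul_inv_rev, inv_simple, mul_assoc, cs.simple_mul_simple_cancel_left,
      cs.simple_mul_simple_self]
  have h6 : Nf cs w (cs.simple i * t' * cs.simple i) = 1 := by
    rw [h5]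
    by_contra hcon
    have h7 := length_lt_of_Nf_ne_one cs w _ hcon
    have e : (w * t * w⁻¹) * w = w * t := by group
    rw [e, hstrong] at h7
    omega
  rw [h6, mul_one, Nf_simple] at h3
  have h7 : t' = cs.simple i := delta_ne_one_iff.mp h3
  have h8 : u * t = cs.simple i * u := by
    have h9 : u * t * u⁻¹ = cs.simple i := by rw [← ht']; exact h7
    calc u * t = (u * t * u⁻¹) * u := by group
      _ = cs.simple i * u := by rw [h9]
  rw [hu] at h8
  have h9 : cs.simple i * w * t = w := by
    rw [h8, ← mul_assoc, cs.simple_mul_simple_self, one_mul]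
  have h10 : w * t = cs.simple i * w := by
    calc w * t = (cs.simple i * w * t) * t := by rw [h9]
      _ = cs.simple i * w * (t * t) := by rw [mul_assoc]
      _ = cs.simple i * w := by rw [ht.mul_self, mul_one]
  exact h10.symm

end Statement2Aux

open CoxeterSystem Statement2Aux

theorem statement2 {B : Type*} {W : Type*} [Group W] {M : CoxeterMatrix B}
    (cs : CoxeterSystem M W) (w t : W) (i : B)
    (ht : cs.IsReflection t)
    (hne : cs.simple i * w ≠ w * t)
    (hstrong : cs.length (w * t) = cs.length w + 1)
    (hweak : cs.length (cs.simple i * w) = cs.length w + 1) :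
    cs.length (cs.simple i * w * t) = cs.length w + 2 ∧
    -- `s_α w s_γ` covers `w s_γ` in the left weak order (via `s_α`)
    cs.length (cs.simple i * (w * t)) = cs.length (w * t) + 1 ∧
    -- `s_α w s_γ` covers `s_α w` in the strong Bruhat order (via right mult. by `s_γ`)
    cs.length ((cs.simple i * w) * t) = cs.length (cs.simple i * w) + 1 := by
  have key : cs.length (cs.simple i * w * t) = cs.length w + 2 := by
    rcases cs.length_simple_mul (w * t) i with h | h
    · rw [← mul_assoc] at h
      rw [h, hstrong]
    · exfalso
      rw [← mul_assoc, hstrong] at h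
      exact hne (key_lemma cs ht hstrong hweak (by omega))
  refine ⟨key, ?_, ?_⟩
  · rw [← mul_assoc, key, hstrong]
  · rw [key, hweak]
end

section
/- Let W be a Weyl group with parabolic subgroup W_P generated by a subset of simple reflections, and W^P the set of minimal length coset representatives of W/W_P. Suppose w ∈ W, α ∈ Δ, γ ∈ Φ⁺ with s_α w ≠ w s_γ, ℓ(s_α w s_γ) = ℓ(w) + 2, ℓ(s_α w) = ℓ(w s_γ) = ℓ(w) + 1. If w s_γ ∈ W^P and s_α w ∈ W^P, then w ∈ W^P and s_α w s_γ ∈ W^P. -/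
/-!
STATEMENT 4 (Lemma "bruhat2 (iii)" of the paper, stated for a general Coxeter system,
which includes the Weyl group of any crystallographic root system).

The standard parabolic subgroup `W_P` is generated by the simple reflections `cs.simple i`
for `i` in a subset `S` of the Coxeter generators.  The set `W^P` of minimal length coset
representatives of `W/W_P` is characterized (as in the paper's context) by
`w ∈ W^P ↔ ∀ i ∈ S, ℓ(w * s_i) = ℓ(w) + 1`.
The reflection `s_γ` attached to the positive root `γ` is an abstract reflection `t`,
and `s_α = cs.simple i` for the simple root `α`.
-/

open CoxeterSystem

/-- `w` is a minimal length representative of its coset `w W_P`, where `W_P` is the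
standard parabolic subgroup generated by the simple reflections indexed by `S`. -/
def IsMinimalCosetRep {B : Type*} {W : Type*} [Group W] {M : CoxeterMatrix B}
    (cs : CoxeterSystem M W) (S : Set B) (w : W) : Prop :=
  ∀ i ∈ S, cs.length (w * cs.simple i) = cs.length w + 1

namespace StrongExch

open List
open scoped Classical


variable {B : Type*} {W : Type*} [Group W] {M : CoxeterMatrix B} (cs : CoxeterSystem M W)

private lemma zmod2_add_self (x : ZMod 2) : x + x = 0 := by revert x; decide

/-- The basic involution of `W × ZMod 2` attached to a simple reflection. -/
noncomputable def eta (i : B) : Equiv.Perm (W × ZMod 2) :=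
  Function.Involutive.toPerm
    (fun z => (cs.simple i * z.1 * cs.simple i, z.2 + if z.1 = cs.simple i then 1 else 0))
    (by
      intro z
      have h1 : cs.simple i * (cs.simple i * z.1 * cs.simple i) * cs.simple i = z.1 := by
        simp only [← mul_assoc]
        rw [cs.simple_mul_simple_self, one_mul, mul_assoc, cs.simple_mul_simple_self, mul_one]
      have h2 : (cs.simple i * z.1 * cs.simple i = cs.simple i) ↔ (z.1 = cs.simple i) := by
        constructor
        · intro h
          have := congrArg (fun x => cs.simple i * x * cs.simple i) h
          rw [h1] at this
          rw [this, cs.simple_mul_simple_self, one_mul]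
        · intro h; rw [h]; simp [cs.simple_mul_simple_cancel_left]
      ext
      · exact h1
      · simp only [h2]
        rcases em (z.1 = cs.simple i) with h | h <;>
          simp [h, add_assoc, zmod2_add_self])

lemma eta_apply (i : B) (t : W) (ε : ZMod 2) :
    eta cs i (t, ε) = (cs.simple i * t * cs.simple i, ε + if t = cs.simple i then 1 else 0) := rfl

lemma eta_pow (i i' : B) (k : ℕ) (t : W) (ε : ZMod 2) :
    ((eta cs i * eta cs i') ^ k) (t, ε) =
      ((cs.simple i * cs.simple i') ^ k * t * ((cs.simple i * cs.simple i')⁻¹) ^ k,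
        ε + ∑ l ∈ Finset.range k,
          ((if t = ((cs.simple i * cs.simple i')⁻¹) ^ l * cs.simple i'
                * (cs.simple i * cs.simple i') ^ l then 1 else 0)
            + (if t = ((cs.simple i * cs.simple i')⁻¹) ^ l
                * (cs.simple i' * cs.simple i * cs.simple i')
                * (cs.simple i * cs.simple i') ^ l then 1 else 0))) := by
  induction k with
  | zero => simp
  | succ k ih =>
    rw [pow_succ']
    have hstep : ((eta cs i * eta cs i') * (eta cs i * eta cs i') ^ k) (t, ε)
        = (eta cs i) ((eta cs i') (((eta cs i * eta cs i') ^ k) (t, ε))) := rfl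
    rw [hstep, ih, eta_apply, eta_apply]
    set p := cs.simple i * cs.simple i' with hp
    congr 1
    · -- first components
      show cs.simple i * (cs.simple i' * (p ^ k * t * (p⁻¹) ^ k) * cs.simple i') * cs.simple i
          = p ^ (k + 1) * t * (p⁻¹) ^ (k + 1)
      rw [pow_succ', pow_succ]
      simp [hp, mul_assoc, mul_inv_rev, cs.inv_simple]
    · -- second components
      show _ + (if p ^ k * t * (p⁻¹) ^ k = cs.simple i' then 1 else 0)
            + (if cs.simple i' * (p ^ k * t * (p⁻¹) ^ k) * cs.simple i' = cs.simple i
                then 1 else 0)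
          = ε + ∑ l ∈ Finset.range (k + 1), _
      rw [Finset.sum_range_succ]
      have e1 : (p ^ k * t * (p⁻¹) ^ k = cs.simple i')
          ↔ (t = (p⁻¹) ^ k * cs.simple i' * p ^ k) := by
        constructor
        · intro h; rw [← h]; group
        · intro h; rw [h]; group
      have e2 : (cs.simple i' * (p ^ k * t * (p⁻¹) ^ k) * cs.simple i' = cs.simple i)
          ↔ (t = (p⁻¹) ^ k * (cs.simple i' * cs.simple i * cs.simple i') * p ^ k) := by
        constructor
        · intro h
          rw [← h]
          have hc : cs.simple i' * (cs.simple i' * (p ^ k * t * p⁻¹ ^ k) * cs.simple i')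
              * cs.simple i' = p ^ k * t * p⁻¹ ^ k := by
            simp only [← mul_assoc]
            rw [cs.simple_mul_simple_self, one_mul, mul_assoc, cs.simple_mul_simple_self,
              mul_one]
          rw [hc]
          group
        · intro h
          have h' : p ^ k * t * (p⁻¹) ^ k = cs.simple i' * cs.simple i * cs.simple i' := by
            rw [h]; group
          rw [h']
          simp only [← mul_assoc]
          rw [cs.simple_mul_simple_self, one_mul, mul_assoc, cs.simple_mul_simple_self,
            mul_one]
      simp only [e1, e2]
      ring

lemma eta_sum_zero (i i' : B) (t : W) :
    ∑ l ∈ Finset.range (M i i'),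
        ((if t = ((cs.simple i * cs.simple i')⁻¹) ^ l * cs.simple i'
              * (cs.simple i * cs.simple i') ^ l then (1 : ZMod 2) else 0)
          + (if t = ((cs.simple i * cs.simple i')⁻¹) ^ l
              * (cs.simple i' * cs.simple i * cs.simple i')
              * (cs.simple i * cs.simple i') ^ l then 1 else 0)) = 0 := by
  set p := cs.simple i * cs.simple i' with hp
  set q := p⁻¹ with hq
  set m := M i i' with hm
  have hpm : p ^ m = 1 := cs.simple_mul_simple_pow i i'
  have hqm : q ^ m = 1 := by rw [hq, inv_pow, hpm, inv_one]
  have hsp : cs.simple i' * p = q * cs.simple i' := by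
    rw [hq, hp]
    simp [mul_inv_rev, cs.inv_simple, mul_assoc]
  have hspl : ∀ l : ℕ, cs.simple i' * p ^ l = q ^ l * cs.simple i' := by
    intro l
    induction l with
    | zero => simp
    | succ l ihl =>
      rw [pow_succ, ← mul_assoc, ihl, mul_assoc, hsp, pow_succ, mul_assoc]
  have ha : ∀ l : ℕ, q ^ l * cs.simple i' * p ^ l = q ^ (2 * l) * cs.simple i' := by
    intro l
    rw [mul_assoc, hspl, ← mul_assoc, ← pow_add, two_mul]
  have hb : ∀ l : ℕ, q ^ l * (cs.simple i' * cs.simple i * cs.simple i') * p ^ l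
      = q ^ (2 * l + 1) * cs.simple i' := by
    intro l
    have h1 : cs.simple i' * cs.simple i = q := by
      rw [hq, hp]; simp [mul_inv_rev, cs.inv_simple]
    calc q ^ l * (cs.simple i' * cs.simple i * cs.simple i') * p ^ l
        = q ^ l * q * (cs.simple i' * p ^ l) := by rw [h1]; group
      _ = q ^ l * q * (q ^ l * cs.simple i') := by rw [hspl]
      _ = q ^ (2 * l + 1) * cs.simple i' := by rw [← pow_succ, ← mul_assoc, ← pow_add]; ring_nf
  set g : ℕ → ZMod 2 := fun e => if t = q ^ e * cs.simple i' then 1 else 0 with hg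
  have key : ∀ l : ℕ,
      ((if t = q ^ l * cs.simple i' * p ^ l then (1 : ZMod 2) else 0)
        + (if t = q ^ l * (cs.simple i' * cs.simple i * cs.simple i') * p ^ l then 1 else 0))
      = g (2 * l) + g (2 * l + 1) := by
    intro l
    rw [ha, hb]
  rw [Finset.sum_congr rfl (fun l _ => key l)]
  have split : ∀ n : ℕ, ∑ l ∈ Finset.range n, (g (2 * l) + g (2 * l + 1))
      = ∑ e ∈ Finset.range (2 * n), g e := by
    intro n
    induction n with
    | zero => simp
    | succ n ihn =>
      rw [Finset.sum_range_succ, ihn, mul_add, mul_one, Finset.sum_range_succ,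
        Finset.sum_range_succ, add_assoc]
  rw [split]
  have hper : ∀ e, g (m + e) = g e := by
    intro e
    simp only [hg, pow_add, hqm, one_mul]
  rw [two_mul, Finset.sum_range_add]
  simp only [hper]
  exact zmod2_add_self _

lemma eta_liftable : M.IsLiftable (eta cs) := by
  intro i i'
  ext z
  · show ((((eta cs i * eta cs i') ^ M i i') (z.1, z.2)) : W × ZMod 2).1 = (z.1, z.2).1
    rw [eta_pow]
    show (cs.simple i * cs.simple i') ^ M i i' * z.1
        * ((cs.simple i * cs.simple i')⁻¹) ^ M i i' = z.1
    rw [inv_pow, cs.simple_mul_simple_pow]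
    simp
  · show ((((eta cs i * eta cs i') ^ M i i') (z.1, z.2)) : W × ZMod 2).2 = (z.1, z.2).2
    rw [eta_pow]
    show z.2 + _ = z.2
    rw [eta_sum_zero, add_zero]

/-- The sign-cocycle representation `W →* Perm (W × ZMod 2)`. -/
noncomputable def phi : W →* Equiv.Perm (W × ZMod 2) :=
  cs.lift ⟨eta cs, eta_liftable cs⟩

lemma phi_simple (i : B) : phi cs (cs.simple i) = eta cs i :=
  cs.lift_apply_simple (eta_liftable cs) i

lemma phi_fst (x : W) : ∀ z : W × ZMod 2, ((phi cs x) z).1 = x * z.1 * x⁻¹ := by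
  induction x using cs.simple_induction_left with
  | one => simp
  | mul_simple_left w j ih =>
    intro z
    rw [map_mul, Equiv.Perm.mul_apply, phi_simple]
    have h := ih z
    rcases h' : (phi cs w) z with ⟨u, c⟩
    rw [h'] at h
    simp only at h
    rw [eta_apply]
    simp only [h, mul_inv_rev, cs.inv_simple, mul_assoc]

lemma phi_snd (x : W) : ∀ (u : W) (ε δ : ZMod 2),
    ((phi cs x) (u, ε + δ)).2 = ((phi cs x) (u, ε)).2 + δ := by
  induction x using cs.simple_induction_left with
  | one => intro u ε δ; simp
  | mul_simple_left w j ih =>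
    intro u ε δ
    rw [map_mul, Equiv.Perm.mul_apply, Equiv.Perm.mul_apply, phi_simple]
    have h1 := phi_fst cs w (u, ε + δ)
    have h2 := phi_fst cs w (u, ε)
    rcases h' : (phi cs w) (u, ε) with ⟨v, c⟩
    rcases h'' : (phi cs w) (u, ε + δ) with ⟨v', c'⟩
    rw [h'] at h2; rw [h''] at h1
    simp only at h1 h2
    have hv : v' = v := by rw [h1, h2]
    have hc : c' = c + δ := by
      have := ih u ε δ
      rw [h', h''] at this
      simpa using this
    rw [eta_apply, eta_apply, hv, hc]
    simp only
    ring

lemma phi_count (ω : List B) : ∀ (u : W) (ε : ZMod 2),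
    (phi cs) (cs.wordProd ω)⁻¹ (u, ε)
      = ((cs.wordProd ω)⁻¹ * u * cs.wordProd ω,
          ε + (((cs.leftInvSeq ω).count u : ℕ) : ZMod 2)) := by
  induction ω with
  | nil => intro u ε; simp
  | cons j ω ih =>
    intro u ε
    have hw : (cs.wordProd (j :: ω))⁻¹ = (cs.wordProd ω)⁻¹ * cs.simple j := by
      rw [cs.wordProd_cons]; simp [mul_inv_rev, cs.inv_simple]
    rw [hw, map_mul, Equiv.Perm.mul_apply, phi_simple, eta_apply, ih]
    have hseq : cs.leftInvSeq (j :: ω)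
        = cs.simple j :: List.map (⇑(MulAut.conj (cs.simple j))) (cs.leftInvSeq ω) := rfl
    have hfb : (MulAut.conj (cs.simple j)) (cs.simple j * u * cs.simple j) = u := by
      simp only [MulAut.conj_apply, cs.inv_simple, ← mul_assoc]
      rw [cs.simple_mul_simple_self, one_mul, mul_assoc, cs.simple_mul_simple_self, mul_one]
    have hmap : List.count u (List.map (⇑(MulAut.conj (cs.simple j))) (cs.leftInvSeq ω))
        = List.count (cs.simple j * u * cs.simple j) (cs.leftInvSeq ω) := by
      have := List.count_map_of_injective (cs.leftInvSeq ω) (⇑(MulAut.conj (cs.simple j)))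
        (MulAut.conj (cs.simple j)).injective (cs.simple j * u * cs.simple j)
      rw [hfb] at this
      exact this
    congr 1
    · rw [cs.wordProd_cons]
      simp [mul_inv_rev, cs.inv_simple, mul_assoc]
    · rw [hseq, List.count_cons, hmap]
      push_cast
      rcases em (u = cs.simple j) with h | h
      · rw [if_pos h, if_pos (by simp only [beq_iff_eq]; exact h.symm)]
        ring
      · rw [if_neg h, if_neg (by simp only [beq_iff_eq]; exact fun hh => h hh.symm)]
        ring


lemma phi_reflection {t : W} (ht : cs.IsReflection t) (ε : ZMod 2) :
    phi cs t (t, ε) = (t, ε + 1) := by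
  obtain ⟨u, k, rfl⟩ := ht
  have hmul : phi cs (u * cs.simple k * u⁻¹)
      = phi cs u * phi cs (cs.simple k) * phi cs u⁻¹ := by
    rw [← map_mul, ← map_mul]
  rcases h1 : phi cs u⁻¹ (u * cs.simple k * u⁻¹, ε) with ⟨v, c⟩
  have hv : v = cs.simple k := by
    have h2 := phi_fst cs u⁻¹ (u * cs.simple k * u⁻¹, ε)
    rw [h1] at h2
    simp only at h2
    rw [h2]; group
  rw [hv] at h1
  have hback : phi cs u (cs.simple k, c) = (u * cs.simple k * u⁻¹, ε) := by
    rw [← h1, ← Equiv.Perm.mul_apply, ← map_mul]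
    simp
  have h4 := phi_snd cs u (cs.simple k) c 1
  have h5 := phi_fst cs u (cs.simple k, c + 1)
  rw [hback] at h4
  simp only at h4
  rw [hmul, Equiv.Perm.mul_apply, Equiv.Perm.mul_apply, h1, phi_simple, eta_apply,
    if_pos rfl]
  rw [show cs.simple k * cs.simple k * cs.simple k = cs.simple k by
    rw [cs.simple_mul_simple_self, one_mul]]
  rcases h6 : phi cs u (cs.simple k, c + 1) with ⟨a, b⟩
  rw [h6] at h4 h5
  simp only at h4 h5
  rw [h5, h4]


lemma mem_leftInvSeq_of_isLeftInversion {t x : W} (ht : cs.IsReflection t)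
    (hlt : cs.length (t * x) < cs.length x) {ω : List B} (hω : cs.wordProd ω = x) :
    t ∈ cs.leftInvSeq ω := by
  have hx : (phi cs) x⁻¹ (t, 0)
      = (x⁻¹ * t * x, (((cs.leftInvSeq ω).count t : ℕ) : ZMod 2)) := by
    rw [← hω, phi_count, zero_add]
  obtain ⟨σ, hσlen, hσ⟩ := cs.exists_reduced_word (t * x)
  have hred : cs.IsReduced σ := hσlen
  have hy : (phi cs) (t * x)⁻¹ (t, 0)
      = ((t * x)⁻¹ * t * (t * x), (((cs.leftInvSeq σ).count t : ℕ) : ZMod 2)) := by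
    rw [hσ, phi_count, zero_add]
  have hrel : (t * x)⁻¹ = x⁻¹ * t := by rw [mul_inv_rev, ht.inv]
  have hcomp : (phi cs) (t * x)⁻¹ (t, 0) = (phi cs x⁻¹) (t, (1 : ZMod 2)) := by
    rw [hrel, map_mul, Equiv.Perm.mul_apply, phi_reflection cs ht 0, zero_add]
  have hsnd : ((phi cs x⁻¹) (t, (1 : ZMod 2))).2
      = (((cs.leftInvSeq ω).count t : ℕ) : ZMod 2) + 1 := by
    have h1 := phi_snd cs x⁻¹ t 0 1
    rw [zero_add] at h1
    rw [h1, hx]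
  have hkey : (((cs.leftInvSeq σ).count t : ℕ) : ZMod 2)
      = (((cs.leftInvSeq ω).count t : ℕ) : ZMod 2) + 1 := by
    have := congrArg Prod.snd hy
    simp only at this
    rw [← this, hcomp, hsnd]
  have hcases : ∀ n : ZMod 2, n = 0 ∨ n = 1 := by decide
  rcases hcases (((cs.leftInvSeq ω).count t : ℕ) : ZMod 2) with h0 | h1
  · -- then count in σ is odd, so t is a left inversion of t*x : contradiction
    exfalso
    rw [h0, zero_add] at hkey
    have hmem : t ∈ cs.leftInvSeq σ := by
      by_contra hmem
      rw [List.count_eq_zero_of_not_mem hmem] at hkey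
      simp at hkey
    have hinv := cs.isLeftInversion_of_mem_leftInvSeq hred hmem
    rw [← hσ] at hinv
    have h2 : t * (t * x) = x := by rw [← mul_assoc, ht.mul_self, one_mul]
    have h3 := hinv.2
    rw [h2] at h3
    omega
  · by_contra hmem
    rw [List.count_eq_zero_of_not_mem hmem] at h1
    simp at h1

lemma left_exchange {t x : W} (ht : cs.IsReflection t)
    (hlt : cs.length (t * x) < cs.length x) {ω : List B} (hω : cs.wordProd ω = x) :
    ∃ k < ω.length, t * x = cs.wordProd (ω.eraseIdx k) := by
  have hmem := mem_leftInvSeq_of_isLeftInversion cs ht hlt hω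
  obtain ⟨k, hk, hkt⟩ := List.mem_iff_getElem.mp hmem
  refine ⟨k, by simpa using hk, ?_⟩
  rw [← hω, ← cs.getD_leftInvSeq_mul_wordProd ω k]
  congr 1
  rw [List.getD_eq_getElem _ _ hk]
  exact hkt.symm

lemma right_exchange {t x : W} (ht : cs.IsReflection t)
    (hlt : cs.length (x * t) < cs.length x) {ω : List B} (hω : cs.wordProd ω = x) :
    ∃ k < ω.length, x * t = cs.wordProd (ω.eraseIdx k) := by
  have hmem : t ∈ cs.rightInvSeq ω := by
    have hlt' : cs.length (t * x⁻¹) < cs.length x⁻¹ := by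
      have h1 : t * x⁻¹ = (x * t)⁻¹ := by rw [mul_inv_rev, ht.inv]
      rw [h1, cs.length_inv, cs.length_inv]
      exact hlt
    have := mem_leftInvSeq_of_isLeftInversion cs ht hlt'
      (ω := ω.reverse) (by rw [cs.wordProd_reverse, hω])
    rw [cs.leftInvSeq_reverse] at this
    exact List.mem_reverse.mp this
  obtain ⟨k, hk, hkt⟩ := List.mem_iff_getElem.mp hmem
  refine ⟨k, by simpa using hk, ?_⟩
  rw [← hω, ← cs.wordProd_mul_getD_rightInvSeq ω k]
  congr 1
  rw [List.getD_eq_getElem _ _ hk]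
  exact hkt.symm

end StrongExch

theorem statement4 {B : Type*} {W : Type*} [Group W] {M : CoxeterMatrix B}
    (cs : CoxeterSystem M W) (S : Set B) (w t : W) (i : B)
    (ht : cs.IsReflection t)
    (hne : cs.simple i * w ≠ w * t)
    (htop : cs.length (cs.simple i * w * t) = cs.length w + 2)
    (hweak : cs.length (cs.simple i * w) = cs.length w + 1)
    (hstrong : cs.length (w * t) = cs.length w + 1)
    (hwt : IsMinimalCosetRep cs S (w * t))
    (hsw : IsMinimalCosetRep cs S (cs.simple i * w)) :
    IsMinimalCosetRep cs S w ∧ IsMinimalCosetRep cs S (cs.simple i * w * t) := by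
  constructor
  · -- w is a minimal coset representative
    intro j hj
    rcases cs.length_mul_simple w j with h | h
    · exact h
    · exfalso
      have h1 := hsw j hj
      rw [hweak] at h1
      have h2 := cs.length_mul_le (cs.simple i) (w * cs.simple j)
      rw [cs.length_simple, ← mul_assoc] at h2
      omega
  · -- s i * w * t is a minimal coset representative
    intro j hj
    rcases cs.length_mul_simple (cs.simple i * w * t) j with h | h
    · exact h
    exfalso
    rw [htop] at h
    -- h : ℓ (s i * w * t * s j) + 1 = ℓ w + 2
    -- Step A : establish the relation s i * w * t = w * t * s j
    obtain ⟨ωz, hzlen, hz⟩ := cs.exists_reduced_word (cs.simple i * w * t * cs.simple j)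
    have hπv : cs.wordProd (ωz ++ [j]) = cs.simple i * w * t := by
      rw [cs.wordProd_append, cs.wordProd_singleton, ← hz,
        cs.simple_mul_simple_cancel_right]
    have hsiv : cs.simple i * (cs.simple i * w * t) = w * t := by
      rw [← mul_assoc, ← mul_assoc, cs.simple_mul_simple_self, one_mul]
    have hlen_v : cs.length (cs.simple i * (cs.simple i * w * t))
        < cs.length (cs.simple i * w * t) := by
      rw [hsiv, hstrong, htop]; omega
    obtain ⟨k, hk, hke⟩ := StrongExch.left_exchange cs (cs.isReflection_simple i) hlen_v hπv
    rw [hsiv] at hke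
    rw [List.length_append, List.length_singleton] at hk
    have hR : cs.simple i * w * t = w * t * cs.simple j := by
      rcases Nat.lt_or_ge k ωz.length with hk2 | hk2
      · exfalso
        rw [List.eraseIdx_append_of_lt_length hk2, cs.wordProd_append,
          cs.wordProd_singleton] at hke
        have h5 : w * t * cs.simple j = cs.wordProd (ωz.eraseIdx k) := by
          rw [hke, cs.simple_mul_simple_cancel_right]
        have h6 := cs.length_wordProd_le (ωz.eraseIdx k)
        rw [← h5] at h6
        have h7 : (ωz.eraseIdx k).length + 1 = ωz.length :=
          List.length_eraseIdx_add_one hk2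
        have h8 := hwt j hj
        rw [hstrong] at h8
        have hzl : cs.length (cs.simple i * w * t * cs.simple j) = ωz.length := by
          rw [hz]; exact hzlen
        omega
      · have hk3 : k = ωz.length := by omega
        rw [hk3, List.eraseIdx_append_of_length_le (le_refl _)] at hke
        simp only [Nat.sub_self, List.eraseIdx_zero, List.tail_cons, List.append_nil] at hke
        -- hke : w * t = π ωz = s i * w * t * s j
        rw [← hz] at hke
        have := congrArg (fun x => x * cs.simple j) hke
        rw [cs.simple_mul_simple_cancel_right] at this
        exact this.symm
    -- Step B : derive a contradiction
    obtain ⟨ωy, hylen, hy⟩ := cs.exists_reduced_word (w * t)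
    have hπu : cs.wordProd (ωy ++ [j]) = w * t * cs.simple j := by
      rw [cs.wordProd_append, cs.wordProd_singleton, ← hy]
    have hut : w * t * cs.simple j * t = cs.simple i * w := by
      rw [← hR, mul_assoc, ht.mul_self, mul_one]
    have hlt2 : cs.length (w * t * cs.simple j * t) < cs.length (w * t * cs.simple j) := by
      rw [hut, hweak, hwt j hj, hstrong]; omega
    obtain ⟨k, hk, hke⟩ := StrongExch.right_exchange cs ht hlt2 hπu
    rw [hut] at hke
    rw [List.length_append, List.length_singleton] at hk
    rcases Nat.lt_or_ge k ωy.length with hk2 | hk2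
    · rw [List.eraseIdx_append_of_lt_length hk2, cs.wordProd_append,
        cs.wordProd_singleton] at hke
      have h5 : cs.simple i * w * cs.simple j = cs.wordProd (ωy.eraseIdx k) := by
        rw [hke, cs.simple_mul_simple_cancel_right]
      have h6 := cs.length_wordProd_le (ωy.eraseIdx k)
      rw [← h5] at h6
      have h7 : (ωy.eraseIdx k).length + 1 = ωy.length :=
        List.length_eraseIdx_add_one hk2
      have h8 := hsw j hj
      rw [hweak] at h8
      have h9 : ωy.length = cs.length w + 1 := by rw [← hstrong, hy]; exact hylen.symm
      omega
    · have hk3 : k = ωy.length := by omega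
      rw [hk3, List.eraseIdx_append_of_length_le (le_refl _)] at hke
      simp only [Nat.sub_self, List.eraseIdx_zero, List.tail_cons, List.append_nil] at hke
      rw [← hy] at hke
      exact hne hke
end

section
/- The group Spin₇ (equivalently SO₇, acting via its vector representation on a 7-dimensional quadratic space) has a dense orbit on the product OG(2,7) × OG(2,7) × OG(3,7) of orthogonal isotropic Grassmannians. Concretely, for the standard quadratic form with ⟨e_i, e_j⟩ ≠ 0 iff i + j = 8, the stabilizer in SO₇ of the triple (span(e₁,e₂), span(e₆,e₇), span(e₁+e₃, e₅−e₇, e₂+e₄−e₆)) is 1-dimensional, and dim(OG(2,7)² × OG(3,7)) = 20 = dim SO₇ − 1. -/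
/-!
STATEMENT 17 (Remark `rema:dense-orbit`).  On `ℂ⁷` with the symmetric bilinear form given
by `⟨e_i, e_j⟩ ≠ 0 iff i + j = 8` (1-based; with 0-based indices `i + j = 6`), consider the
isotropic subspaces `U₁ = span(e₁, e₂)`, `U₂ = span(e₆, e₇)` and
`U₃ = span(e₁+e₃, e₅−e₇, e₂+e₄−e₆)`.  The statement that `Spin₇` (equivalently `SO₇`) has a
dense orbit on `OG(2,7) × OG(2,7) × OG(3,7)` amounts to the stabilizer of the triple
`(U₁, U₂, U₃)` being 1-dimensional, since
`dim(OG(2,7)² × OG(3,7)) = 20 = dim SO₇ − 1 = 21 − 1`.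

We formalize the dimension computation infinitesimally: the Lie algebra
`𝔰𝔬₇ = {X : Xᵀ J + J X = 0}` (of dimension 21) of the stabilizer of the form, intersected
with the stabilizers of `U₁`, `U₂`, `U₃`, is a 1-dimensional subspace, and
`dim 𝔰𝔬₇ = 21 = 20 + 1`.
-/

open Matrix

/-- The Gram matrix of the bilinear form: `J i j = 1` iff `i + j = 6` (0-based). -/
noncomputable def formJ : Matrix (Fin 7) (Fin 7) ℂ :=
  Matrix.of fun i j => if (i : ℕ) + (j : ℕ) = 6 then 1 else 0

/-- The linear map `X ↦ Xᵀ J + J X`, whose kernel is `𝔰𝔬₇`. -/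
noncomputable def soMap : Matrix (Fin 7) (Fin 7) ℂ →ₗ[ℂ] Matrix (Fin 7) (Fin 7) ℂ where
  toFun X := Xᵀ * formJ + formJ * X
  map_add' X Y := by
    simp [Matrix.transpose_add, Matrix.add_mul, Matrix.mul_add]; abel
  map_smul' c X := by
    simp [Matrix.transpose_smul, Matrix.smul_mul, Matrix.mul_smul]

/-- The Lie algebra `𝔰𝔬₇` of the orthogonal group of the form `J`. -/
noncomputable def so7 : Submodule ℂ (Matrix (Fin 7) (Fin 7) ℂ) := LinearMap.ker soMap

/-- The infinitesimal stabilizer of a subspace `U ⊆ ℂ⁷`: matrices mapping `U` into `U`. -/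
noncomputable def stabilizer (U : Submodule ℂ (Fin 7 → ℂ)) : Submodule ℂ (Matrix (Fin 7) (Fin 7) ℂ) where
  carrier := {X | ∀ u ∈ U, X.mulVec u ∈ U}
  zero_mem' := by intro u hu; simp [Matrix.zero_mulVec, U.zero_mem]
  add_mem' := by
    intro X Y hX hY u hu
    simpa [Matrix.add_mulVec] using U.add_mem (hX u hu) (hY u hu)
  smul_mem' := by
    intro c X hX u hu
    simpa [Matrix.smul_mulVec] using U.smul_mem c (hX u hu)

/-- Standard basis vector of `ℂ⁷`. -/
noncomputable def e (i : Fin 7) : Fin 7 → ℂ := Pi.single i 1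

/-- `U₁ = span(e₁, e₂)` (1-based), an isotropic 2-plane. -/
noncomputable def U1 : Submodule ℂ (Fin 7 → ℂ) := Submodule.span ℂ {e 0, e 1}

/-- `U₂ = span(e₆, e₇)` (1-based), an isotropic 2-plane. -/
noncomputable def U2 : Submodule ℂ (Fin 7 → ℂ) := Submodule.span ℂ {e 5, e 6}

/-- `U₃ = span(e₁+e₃, e₅−e₇, e₂+e₄−e₆)` (1-based), an isotropic 3-plane. -/
noncomputable def U3 : Submodule ℂ (Fin 7 → ℂ) :=
  Submodule.span ℂ {e 0 + e 2, e 4 - e 6, e 1 + e 3 - e 5}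


section Aux
open Submodule

lemma fv0 : ((0:Fin 7):ℕ) = 0 := rfl
lemma fv1 : ((1:Fin 7):ℕ) = 1 := rfl
lemma fv2 : ((2:Fin 7):ℕ) = 2 := rfl
lemma fv3 : ((3:Fin 7):ℕ) = 3 := rfl
lemma fv4 : ((4:Fin 7):ℕ) = 4 := rfl
lemma fv5 : ((5:Fin 7):ℕ) = 5 := rfl
lemma fv6 : ((6:Fin 7):ℕ) = 6 := rfl

lemma mem_stab {U : Submodule ℂ (Fin 7 → ℂ)} {X : Matrix (Fin 7) (Fin 7) ℂ} :
    X ∈ stabilizer U ↔ ∀ u ∈ U, X.mulVec u ∈ U := Iff.rfl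

lemma mulVec_e (X : Matrix (Fin 7) (Fin 7) ℂ) (j : Fin 7) :
    X.mulVec (e j) = fun i => X i j := by
  funext i
  simp [Matrix.mulVec, dotProduct, e, Pi.single_apply]

lemma mem_U1_iff (v : Fin 7 → ℂ) :
    v ∈ U1 ↔ v 2 = 0 ∧ v 3 = 0 ∧ v 4 = 0 ∧ v 5 = 0 ∧ v 6 = 0 := by
  constructor
  · intro h
    induction h using Submodule.span_induction with
    | mem x hx => rcases hx with h | h <;> subst h <;> norm_num [e, Pi.single_apply, Fin.ext_iff, fv0, fv1, fv2, fv3, fv4, fv5, fv6]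
    | zero => norm_num
    | add x y _ _ hx hy =>
        obtain ⟨a1,a2,a3,a4,a5⟩ := hx; obtain ⟨b1,b2,b3,b4,b5⟩ := hy
        simp [a1,a2,a3,a4,a5,b1,b2,b3,b4,b5]
    | smul c x _ hx => obtain ⟨a1,a2,a3,a4,a5⟩ := hx; simp [a1,a2,a3,a4,a5]
  · rintro ⟨h2,h3,h4,h5,h6⟩
    have hv : v = v 0 • e 0 + v 1 • e 1 := by
      funext i; fin_cases i <;> simp [e, Pi.single_apply, h2,h3,h4,h5,h6]
    rw [hv]
    exact add_mem (smul_mem _ _ (subset_span (by simp))) (smul_mem _ _ (subset_span (by simp)))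

lemma mem_U2_iff (v : Fin 7 → ℂ) :
    v ∈ U2 ↔ v 0 = 0 ∧ v 1 = 0 ∧ v 2 = 0 ∧ v 3 = 0 ∧ v 4 = 0 := by
  constructor
  · intro h
    induction h using Submodule.span_induction with
    | mem x hx => rcases hx with h | h <;> subst h <;> norm_num [e, Pi.single_apply, Fin.ext_iff, fv0, fv1, fv2, fv3, fv4, fv5, fv6]
    | zero => norm_num
    | add x y _ _ hx hy =>
        obtain ⟨a1,a2,a3,a4,a5⟩ := hx; obtain ⟨b1,b2,b3,b4,b5⟩ := hy
        simp [a1,a2,a3,a4,a5,b1,b2,b3,b4,b5]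
    | smul c x _ hx => obtain ⟨a1,a2,a3,a4,a5⟩ := hx; simp [a1,a2,a3,a4,a5]
  · rintro ⟨h0,h1,h2,h3,h4⟩
    have hv : v = v 5 • e 5 + v 6 • e 6 := by
      funext i; fin_cases i <;> simp [e, Pi.single_apply, h0,h1,h2,h3,h4]
    rw [hv]
    exact add_mem (smul_mem _ _ (subset_span (by simp))) (smul_mem _ _ (subset_span (by simp)))

lemma mem_U3_iff (v : Fin 7 → ℂ) :
    v ∈ U3 ↔ v 2 = v 0 ∧ v 3 = v 1 ∧ v 5 = -v 1 ∧ v 6 = -v 4 := by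
  constructor
  · intro h
    induction h using Submodule.span_induction with
    | mem x hx =>
        rcases hx with h | h | h <;> subst h <;>
          refine ⟨?_, ?_, ?_, ?_⟩ <;> norm_num [e, Pi.single_apply, Fin.ext_iff, fv0, fv1, fv2, fv3, fv4, fv5, fv6]
    | zero => norm_num
    | add x y _ _ hx hy =>
        obtain ⟨a1,a2,a3,a4⟩ := hx; obtain ⟨b1,b2,b3,b4⟩ := hy
        refine ⟨?_,?_,?_,?_⟩ <;> simp [a1,a2,a3,a4,b1,b2,b3,b4] <;> ring
    | smul c x _ hx =>
        obtain ⟨a1,a2,a3,a4⟩ := hx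
        refine ⟨?_,?_,?_,?_⟩ <;> simp [a1,a2,a3,a4]
  · rintro ⟨h2,h3,h5,h6⟩
    have hv : v = v 0 • (e 0 + e 2) + v 4 • (e 4 - e 6) + v 1 • (e 1 + e 3 - e 5) := by
      funext i; fin_cases i <;> simp [e, Pi.single_apply, h2,h3,h5,h6]
    rw [hv]
    refine add_mem (add_mem (smul_mem _ _ (subset_span (by simp)))
      (smul_mem _ _ (subset_span (by simp)))) (smul_mem _ _ (subset_span (by simp)))

lemma val_rev_cond (j k : Fin 7) : ((k:ℕ) + (j:ℕ) = 6) ↔ (k = j.rev) := by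
  rw [Fin.ext_iff, Fin.val_rev]
  have := j.is_lt; have := k.is_lt
  omega

lemma soMap_apply (X : Matrix (Fin 7) (Fin 7) ℂ) (i j : Fin 7) :
    soMap X i j = X j.rev i + X i.rev j := by
  have key : ∀ (v : Fin 7 → ℂ) (j : Fin 7), (∑ k, v k * formJ k j) = v j.rev := by
    intro v j
    simp only [formJ, Matrix.of_apply, mul_ite, mul_one, mul_zero]
    simp_rw [fun k => propext (val_rev_cond j k)]
    simp
  have key2 : ∀ (v : Fin 7 → ℂ) (i : Fin 7), (∑ k, formJ i k * v k) = v i.rev := by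
    intro v i
    simp only [formJ, Matrix.of_apply, ite_mul, one_mul, zero_mul]
    have : ∀ k : Fin 7, ((i:ℕ) + (k:ℕ) = 6) ↔ (k = i.rev) := by
      intro k; rw [Fin.ext_iff, Fin.val_rev]; have := i.is_lt; have := k.is_lt; omega
    simp_rw [fun k => propext (this k)]
    simp
  show (Xᵀ * formJ + formJ * X) i j = _
  rw [Matrix.add_apply, Matrix.mul_apply, Matrix.mul_apply]
  rw [show (∑ k, Xᵀ i k * formJ k j) = ∑ k, X k i * formJ k j from by
    simp [Matrix.transpose_apply]]
  rw [key (fun k => X k i) j, key2 (fun k => X k j) i]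

/-- The generator of the one-dimensional stabilizer. -/
noncomputable def dvec : Fin 7 → ℂ := fun i =>
  if (i:ℕ) = 0 ∨ (i:ℕ) = 2 then 1 else if (i:ℕ) = 4 ∨ (i:ℕ) = 6 then -1 else 0

noncomputable def X0 : Matrix (Fin 7) (Fin 7) ℂ := Matrix.diagonal dvec

lemma X0_ne_zero : X0 ≠ 0 := by
  intro h
  have := congrFun (congrFun h 0) 0
  simp [X0, dvec, Matrix.diagonal] at this

lemma X0_mem_so7 : X0 ∈ so7 := by
  have : soMap X0 = 0 := by
    ext i j
    rw [soMap_apply]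
    fin_cases i <;> fin_cases j <;>
      norm_num [X0, dvec, Matrix.diagonal, Fin.rev, Fin.ext_iff, fv0, fv1, fv2, fv3, fv4, fv5, fv6, -Fin.val_eq_zero_iff]
  simpa [so7, LinearMap.mem_ker] using this

lemma X0_mulVec (u : Fin 7 → ℂ) (i : Fin 7) :
    X0.mulVec u i = dvec i * u i := by
  simp [X0, Matrix.mulVec_diagonal]

lemma dv0 : dvec 0 = 1 := by norm_num [dvec, fv0]
lemma dv1 : dvec 1 = 0 := by norm_num [dvec, fv1]
lemma dv2 : dvec 2 = 1 := by norm_num [dvec, fv2]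
lemma dv3 : dvec 3 = 0 := by norm_num [dvec, fv3]
lemma dv4 : dvec 4 = -1 := by norm_num [dvec, fv4]
lemma dv5 : dvec 5 = 0 := by norm_num [dvec, fv5]
lemma dv6 : dvec 6 = -1 := by norm_num [dvec, fv6]

lemma X0_mem_stab1 : X0 ∈ stabilizer U1 := by
  rw [mem_stab]
  intro u hu
  rw [mem_U1_iff] at hu ⊢
  obtain ⟨h2,h3,h4,h5,h6⟩ := hu
  refine ⟨?_,?_,?_,?_,?_⟩ <;> rw [X0_mulVec] <;> simp [h2,h3,h4,h5,h6]

lemma X0_mem_stab2 : X0 ∈ stabilizer U2 := by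
  rw [mem_stab]
  intro u hu
  rw [mem_U2_iff] at hu ⊢
  obtain ⟨h0,h1,h2,h3,h4⟩ := hu
  refine ⟨?_,?_,?_,?_,?_⟩ <;> rw [X0_mulVec] <;> simp [h0,h1,h2,h3,h4]

lemma X0_mem_stab3 : X0 ∈ stabilizer U3 := by
  rw [mem_stab]
  intro u hu
  rw [mem_U3_iff] at hu ⊢
  obtain ⟨h2,h3,h5,h6⟩ := hu
  refine ⟨?_,?_,?_,?_⟩ <;> simp only [X0_mulVec] <;> simp [dv0,dv1,dv2,dv3,dv4,dv5,dv6,h2,h3,h5,h6]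

lemma inter_eq :
    so7 ⊓ stabilizer U1 ⊓ stabilizer U2 ⊓ stabilizer U3 = Submodule.span ℂ {X0} := by
  apply le_antisymm
  · intro X hX
    simp only [Submodule.mem_inf] at hX
    obtain ⟨⟨⟨hso, h1⟩, h2⟩, h3⟩ := hX
    have hs : soMap X = 0 := by
      have := hso; simp only [so7, LinearMap.mem_ker] at this; exact this
    have m1 := mem_stab.mp h1
    have m2 := mem_stab.mp h2
    have m3 := mem_stab.mp h3
    have tA := (mem_U1_iff _).mp (m1 (e 0) (subset_span (by simp)))
    have tB := (mem_U1_iff _).mp (m1 (e 1) (subset_span (by simp)))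
    have tC := (mem_U2_iff _).mp (m2 (e 5) (subset_span (by simp)))
    have tD := (mem_U2_iff _).mp (m2 (e 6) (subset_span (by simp)))
    simp only [mulVec_e] at tA tB tC tD
    obtain ⟨hA2,hA3,hA4,hA5,hA6⟩ := tA
    obtain ⟨hB2,hB3,hB4,hB5,hB6⟩ := tB
    obtain ⟨hC0,hC1,hC2,hC3,hC4⟩ := tC
    obtain ⟨hD0,hD1,hD2,hD3,hD4⟩ := tD
    have tP := (mem_U3_iff _).mp (m3 (e 0 + e 2) (subset_span (by simp)))
    have tQ := (mem_U3_iff _).mp (m3 (e 4 - e 6) (subset_span (by simp)))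
    have tR := (mem_U3_iff _).mp (m3 (e 1 + e 3 - e 5) (subset_span (by simp)))
    simp only [Matrix.mulVec_add, Matrix.mulVec_sub, mulVec_e, Pi.add_apply, Pi.sub_apply]
      at tP tQ tR
    obtain ⟨hP2,hP3,hP5,hP6⟩ := tP
    obtain ⟨hQ2,hQ3,hQ5,hQ6⟩ := tQ
    obtain ⟨hR2,hR3,hR5,hR6⟩ := tR
    have hE26 : X 0 2 + X 4 6 = 0 := by
      have h := congrFun (congrFun hs 2) 6
      norm_num [soMap, formJ, Matrix.mul_apply, Fin.sum_univ_seven, fv0, fv1, fv2, fv3, fv4, fv5, fv6] at h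
      first | linear_combination h | linear_combination h / 2
    have hE36 : X 0 3 + X 3 6 = 0 := by
      have h := congrFun (congrFun hs 3) 6
      norm_num [soMap, formJ, Matrix.mul_apply, Fin.sum_univ_seven, fv0, fv1, fv2, fv3, fv4, fv5, fv6] at h
      first | linear_combination h | linear_combination h / 2
    have hE46 : X 0 4 + X 2 6 = 0 := by
      have h := congrFun (congrFun hs 4) 6
      norm_num [soMap, formJ, Matrix.mul_apply, Fin.sum_univ_seven, fv0, fv1, fv2, fv3, fv4, fv5, fv6] at h
      first | linear_combination h | linear_combination h / 2
    have hE25 : X 1 2 + X 4 5 = 0 := by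
      have h := congrFun (congrFun hs 2) 5
      norm_num [soMap, formJ, Matrix.mul_apply, Fin.sum_univ_seven, fv0, fv1, fv2, fv3, fv4, fv5, fv6] at h
      first | linear_combination h | linear_combination h / 2
    have hE35 : X 1 3 + X 3 5 = 0 := by
      have h := congrFun (congrFun hs 3) 5
      norm_num [soMap, formJ, Matrix.mul_apply, Fin.sum_univ_seven, fv0, fv1, fv2, fv3, fv4, fv5, fv6] at h
      first | linear_combination h | linear_combination h / 2
    have hE45 : X 1 4 + X 2 5 = 0 := by
      have h := congrFun (congrFun hs 4) 5
      norm_num [soMap, formJ, Matrix.mul_apply, Fin.sum_univ_seven, fv0, fv1, fv2, fv3, fv4, fv5, fv6] at h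
      first | linear_combination h | linear_combination h / 2
    have hE21 : X 5 2 + X 4 1 = 0 := by
      have h := congrFun (congrFun hs 2) 1
      norm_num [soMap, formJ, Matrix.mul_apply, Fin.sum_univ_seven, fv0, fv1, fv2, fv3, fv4, fv5, fv6] at h
      first | linear_combination h | linear_combination h / 2
    have hE31 : X 5 3 + X 3 1 = 0 := by
      have h := congrFun (congrFun hs 3) 1
      norm_num [soMap, formJ, Matrix.mul_apply, Fin.sum_univ_seven, fv0, fv1, fv2, fv3, fv4, fv5, fv6] at h
      first | linear_combination h | linear_combination h / 2
    have hE41 : X 5 4 + X 2 1 = 0 := by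
      have h := congrFun (congrFun hs 4) 1
      norm_num [soMap, formJ, Matrix.mul_apply, Fin.sum_univ_seven, fv0, fv1, fv2, fv3, fv4, fv5, fv6] at h
      first | linear_combination h | linear_combination h / 2
    have hE20 : X 6 2 + X 4 0 = 0 := by
      have h := congrFun (congrFun hs 2) 0
      norm_num [soMap, formJ, Matrix.mul_apply, Fin.sum_univ_seven, fv0, fv1, fv2, fv3, fv4, fv5, fv6] at h
      first | linear_combination h | linear_combination h / 2
    have hE30 : X 6 3 + X 3 0 = 0 := by
      have h := congrFun (congrFun hs 3) 0
      norm_num [soMap, formJ, Matrix.mul_apply, Fin.sum_univ_seven, fv0, fv1, fv2, fv3, fv4, fv5, fv6] at h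
      first | linear_combination h | linear_combination h / 2
    have hE40 : X 6 4 + X 2 0 = 0 := by
      have h := congrFun (congrFun hs 4) 0
      norm_num [soMap, formJ, Matrix.mul_apply, Fin.sum_univ_seven, fv0, fv1, fv2, fv3, fv4, fv5, fv6] at h
      first | linear_combination h | linear_combination h / 2
    have hE51 : X 5 5 + X 1 1 = 0 := by
      have h := congrFun (congrFun hs 5) 1
      norm_num [soMap, formJ, Matrix.mul_apply, Fin.sum_univ_seven, fv0, fv1, fv2, fv3, fv4, fv5, fv6] at h
      first | linear_combination h | linear_combination h / 2
    have hE50 : X 6 5 + X 1 0 = 0 := by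
      have h := congrFun (congrFun hs 5) 0
      norm_num [soMap, formJ, Matrix.mul_apply, Fin.sum_univ_seven, fv0, fv1, fv2, fv3, fv4, fv5, fv6] at h
      first | linear_combination h | linear_combination h / 2
    have hE61 : X 5 6 + X 0 1 = 0 := by
      have h := congrFun (congrFun hs 6) 1
      norm_num [soMap, formJ, Matrix.mul_apply, Fin.sum_univ_seven, fv0, fv1, fv2, fv3, fv4, fv5, fv6] at h
      first | linear_combination h | linear_combination h / 2
    have hE60 : X 6 6 + X 0 0 = 0 := by
      have h := congrFun (congrFun hs 6) 0
      norm_num [soMap, formJ, Matrix.mul_apply, Fin.sum_univ_seven, fv0, fv1, fv2, fv3, fv4, fv5, fv6] at h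
      first | linear_combination h | linear_combination h / 2
    have hE24 : X 2 2 + X 4 4 = 0 := by
      have h := congrFun (congrFun hs 2) 4
      norm_num [soMap, formJ, Matrix.mul_apply, Fin.sum_univ_seven, fv0, fv1, fv2, fv3, fv4, fv5, fv6] at h
      first | linear_combination h | linear_combination h / 2
    have hE33 : X 3 3 = 0 := by
      have h := congrFun (congrFun hs 3) 3
      norm_num [soMap, formJ, Matrix.mul_apply, Fin.sum_univ_seven, fv0, fv1, fv2, fv3, fv4, fv5, fv6] at h
      first | linear_combination h | linear_combination h / 2
    have hE44 : X 2 4 = 0 := by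
      have h := congrFun (congrFun hs 4) 4
      norm_num [soMap, formJ, Matrix.mul_apply, Fin.sum_univ_seven, fv0, fv1, fv2, fv3, fv4, fv5, fv6] at h
      first | linear_combination h | linear_combination h / 2
    have hE22 : X 4 2 = 0 := by
      have h := congrFun (congrFun hs 2) 2
      norm_num [soMap, formJ, Matrix.mul_apply, Fin.sum_univ_seven, fv0, fv1, fv2, fv3, fv4, fv5, fv6] at h
      first | linear_combination h | linear_combination h / 2
    have hE43 : X 3 4 + X 2 3 = 0 := by
      have h := congrFun (congrFun hs 4) 3
      norm_num [soMap, formJ, Matrix.mul_apply, Fin.sum_univ_seven, fv0, fv1, fv2, fv3, fv4, fv5, fv6] at h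
      first | linear_combination h | linear_combination h / 2
    have hE32 : X 4 3 + X 3 2 = 0 := by
      have h := congrFun (congrFun hs 3) 2
      norm_num [soMap, formJ, Matrix.mul_apply, Fin.sum_univ_seven, fv0, fv1, fv2, fv3, fv4, fv5, fv6] at h
      first | linear_combination h | linear_combination h / 2
    have hv01 : X 0 1 = 0 := by linear_combination hB2 + hD1 + hC2 + (-1:ℂ) * hE45 + (-1:ℂ) * hE41 + hE61 + hQ5
    have hv02 : X 0 2 = 0 := by linear_combination (-1:ℂ) * hD4 + hE26
    have hv03 : X 0 3 = 0 := by linear_combination (-1:ℂ) * hD3 + hE36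
    have hv04 : X 0 4 = 0 := by linear_combination (-1:ℂ) * hD2 + hE46
    have hv05 : X 0 5 = 0 := by linear_combination hC0
    have hv06 : X 0 6 = 0 := by linear_combination hD0
    have hv10 : X 1 0 = 0 := by linear_combination hB4 + (-1:ℂ) * hA5 + hC4 + (-1:ℂ) * hE25 + (-1:ℂ) * hE21 + hP5
    have hv11 : X 1 1 = 0 := by linear_combination hB3 + hC1 + (-1:ℂ) * hE35 + hE33 + (-1:ℂ) * hR3
    have hv12 : X 1 2 = 0 := by linear_combination (-1:ℂ) * hC4 + hE25
    have hv13 : X 1 3 = 0 := by linear_combination (-1:ℂ) * hC3 + hE35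
    have hv14 : X 1 4 = 0 := by linear_combination (-1:ℂ) * hC2 + hE45
    have hv15 : X 1 5 = 0 := by linear_combination hC1
    have hv16 : X 1 6 = 0 := by linear_combination hD1
    have hv20 : X 2 0 = 0 := by linear_combination hA2
    have hv21 : X 2 1 = 0 := by linear_combination hB2
    have hv22 : X 2 2 = X 0 0 := by linear_combination (-1:ℂ) * hA2 + (-1:ℂ) * hD4 + hE26 + hP2
    have hv23 : X 2 3 = 0 := by linear_combination hD1 + hC2 + (-1:ℂ) * hD3 + (-1:ℂ) * hE45 + hE43 + (-1:ℂ) * hQ3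
    have hv24 : X 2 4 = 0 := by linear_combination hE44
    have hv25 : X 2 5 = 0 := by linear_combination hC2
    have hv26 : X 2 6 = 0 := by linear_combination hD2
    have hv30 : X 3 0 = 0 := by linear_combination hA3
    have hv31 : X 3 1 = 0 := by linear_combination hB3
    have hv32 : X 3 2 = 0 := by linear_combination (-1:ℂ) * hA3 + hB4 + (-1:ℂ) * hA5 + (-1:ℂ) * hE21 + hP3 + hP5
    have hv33 : X 3 3 = 0 := by linear_combination hE33
    have hv34 : X 3 4 = 0 := by linear_combination (-1:ℂ) * hD1 + (-1:ℂ) * hC2 + hD3 + hE45 + hQ3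
    have hv35 : X 3 5 = 0 := by linear_combination hC3
    have hv36 : X 3 6 = 0 := by linear_combination hD3
    have hv40 : X 4 0 = 0 := by linear_combination hA4
    have hv41 : X 4 1 = 0 := by linear_combination hB4
    have hv42 : X 4 2 = 0 := by linear_combination hE22
    have hv43 : X 4 3 = 0 := by linear_combination hA3 + (-1:ℂ) * hB4 + hA5 + hE21 + hE32 + (-1:ℂ) * hP3 + (-1:ℂ) * hP5
    have hv44 : X 4 4 = -X 0 0 := by linear_combination hA2 + hD4 + (-1:ℂ) * hE26 + hE24 + (-1:ℂ) * hP2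
    have hv45 : X 4 5 = 0 := by linear_combination hC4
    have hv46 : X 4 6 = 0 := by linear_combination hD4
    have hv50 : X 5 0 = 0 := by linear_combination hA5
    have hv51 : X 5 1 = 0 := by linear_combination hB5
    have hv52 : X 5 2 = 0 := by linear_combination (-1:ℂ) * hB4 + hE21
    have hv53 : X 5 3 = 0 := by linear_combination (-1:ℂ) * hB3 + hE31
    have hv54 : X 5 4 = 0 := by linear_combination (-1:ℂ) * hB2 + hE41
    have hv55 : X 5 5 = 0 := by linear_combination (-1:ℂ) * hB3 + (-1:ℂ) * hC1 + hE35 + hE51 + (-1:ℂ) * hE33 + hR3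
    have hv56 : X 5 6 = 0 := by linear_combination (-1:ℂ) * hB2 + (-1:ℂ) * hD1 + (-1:ℂ) * hC2 + hE45 + hE41 + (-1:ℂ) * hQ5
    have hv60 : X 6 0 = 0 := by linear_combination hA6
    have hv61 : X 6 1 = 0 := by linear_combination hB6
    have hv62 : X 6 2 = 0 := by linear_combination (-1:ℂ) * hA4 + hE20
    have hv63 : X 6 3 = 0 := by linear_combination (-1:ℂ) * hA3 + hE30
    have hv64 : X 6 4 = 0 := by linear_combination (-1:ℂ) * hA2 + hE40
    have hv65 : X 6 5 = 0 := by linear_combination (-1:ℂ) * hB4 + hA5 + (-1:ℂ) * hC4 + hE25 + hE21 + hE50 + (-1:ℂ) * hP5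
    have hv66 : X 6 6 = -X 0 0 := by linear_combination hE60
    rw [Submodule.mem_span_singleton]
    refine ⟨X 0 0, ?_⟩
    ext i j
    fin_cases i <;> fin_cases j <;>
      simp [X0, dvec, Matrix.diagonal, Fin.ext_iff, fv0, fv1, fv2, fv3, fv4, fv5, fv6, hv01, hv02, hv03, hv04, hv05, hv06, hv10, hv11, hv12, hv13, hv14, hv15, hv16, hv20, hv21, hv22, hv23, hv24, hv25, hv26, hv30, hv31, hv32, hv33, hv34, hv35, hv36, hv40, hv41, hv42, hv43, hv44, hv45, hv46, hv50, hv51, hv52, hv53, hv54, hv55, hv56, hv60, hv61, hv62, hv63, hv64, hv65, hv66, -Fin.val_eq_zero_iff]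
  · rw [Submodule.span_le, Set.singleton_subset_iff]
    exact ⟨⟨⟨X0_mem_so7, X0_mem_stab1⟩, X0_mem_stab2⟩, X0_mem_stab3⟩

/-- Index type for a basis of `so7`: pairs strictly above the antidiagonal. -/
abbrev PairIdx := {p : Fin 7 × Fin 7 // (p.1:ℕ) + (p.2:ℕ) < 6}

lemma revrev_lt {a b : Fin 7} (h1 : ¬ (a:ℕ) + (b:ℕ) < 6) (h2 : ¬ (a:ℕ) + (b:ℕ) = 6) :
    ((b.rev:Fin 7):ℕ) + ((a.rev:Fin 7):ℕ) < 6 := by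
  have ha := a.is_lt; have hb := b.is_lt
  simp only [Fin.val_rev]; omega

noncomputable def gmatFun (f : PairIdx → ℂ) : Matrix (Fin 7) (Fin 7) ℂ :=
  Matrix.of fun a b =>
    if h : (a:ℕ) + (b:ℕ) < 6 then f ⟨(a,b), h⟩
    else if h2 : (a:ℕ) + (b:ℕ) = 6 then 0
    else -f ⟨(b.rev, a.rev), revrev_lt h h2⟩

noncomputable def gmat : (PairIdx → ℂ) →ₗ[ℂ] Matrix (Fin 7) (Fin 7) ℂ where
  toFun := gmatFun
  map_add' f g := by
    ext a b
    simp only [gmatFun, Matrix.of_apply, Matrix.add_apply, Pi.add_apply]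
    split_ifs <;> simp <;> ring
  map_smul' c f := by
    ext a b
    simp only [gmatFun, Matrix.of_apply, Matrix.smul_apply, Pi.smul_apply, RingHom.id_apply,
      smul_eq_mul]
    split_ifs <;> simp <;> ring



lemma gmat_skew (f : PairIdx → ℂ) (a b : Fin 7) :
    gmatFun f a b + gmatFun f b.rev a.rev = 0 := by
  have ha := a.is_lt; have hb := b.is_lt
  have hra : ((a.rev : Fin 7):ℕ) = 6 - (a:ℕ) := by rw [Fin.val_rev]; omega
  have hrb : ((b.rev : Fin 7):ℕ) = 6 - (b:ℕ) := by rw [Fin.val_rev]; omega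
  rcases lt_trichotomy ((a:ℕ) + (b:ℕ)) 6 with h | h | h
  · simp only [gmatFun, Matrix.of_apply]
    rw [dif_pos h,
      dif_neg (by omega : ¬ ((b.rev:Fin 7):ℕ) + ((a.rev:Fin 7):ℕ) < 6),
      dif_neg (by omega : ¬ ((b.rev:Fin 7):ℕ) + ((a.rev:Fin 7):ℕ) = 6)]
    simp [Fin.rev_rev]
  · simp only [gmatFun, Matrix.of_apply]
    rw [dif_neg (by omega : ¬ (a:ℕ) + (b:ℕ) < 6), dif_pos h,
      dif_neg (by omega : ¬ ((b.rev:Fin 7):ℕ) + ((a.rev:Fin 7):ℕ) < 6),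
      dif_pos (by omega : ((b.rev:Fin 7):ℕ) + ((a.rev:Fin 7):ℕ) = 6)]
    simp
  · simp only [gmatFun, Matrix.of_apply]
    rw [dif_neg (by omega : ¬ (a:ℕ) + (b:ℕ) < 6),
      dif_neg (by omega : ¬ (a:ℕ) + (b:ℕ) = 6),
      dif_pos (by omega : ((b.rev:Fin 7):ℕ) + ((a.rev:Fin 7):ℕ) < 6)]
    ring

lemma gmat_inj : Function.Injective gmat := by
  rw [injective_iff_map_eq_zero]
  intro f hf
  funext p
  obtain ⟨⟨a,b⟩, h⟩ := p
  have := congrFun (congrFun hf a) b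
  simpa [gmat, gmatFun, dif_pos h] using this

lemma gmat_range : LinearMap.range gmat = so7 := by
  apply le_antisymm
  · rintro Y ⟨f, rfl⟩
    simp only [so7, LinearMap.mem_ker]
    ext i j
    rw [soMap_apply]
    show gmatFun f j.rev i + gmatFun f i.rev j = 0
    have := gmat_skew f j.rev i
    rwa [Fin.rev_rev] at this
  · intro X hX
    have hs : soMap X = 0 := by
      have := hX; simp only [so7, LinearMap.mem_ker] at this; exact this
    have rel : ∀ a b : Fin 7, X a b + X b.rev a.rev = 0 := by
      intro a b
      have h := congrFun (congrFun hs b) a.rev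
      rw [soMap_apply] at h
      rwa [Fin.rev_rev] at h
    refine ⟨fun p => X p.1.1 p.1.2, ?_⟩
    have hcoe : (gmat (fun p => X p.1.1 p.1.2) : Matrix (Fin 7) (Fin 7) ℂ)
        = gmatFun (fun p => X p.1.1 p.1.2) := rfl
    rw [hcoe]
    ext a b
    have ha := a.is_lt; have hb := b.is_lt
    have hra : ((a.rev : Fin 7):ℕ) = 6 - (a:ℕ) := by rw [Fin.val_rev]; omega
    have hrb : ((b.rev : Fin 7):ℕ) = 6 - (b:ℕ) := by rw [Fin.val_rev]; omega
    rcases lt_trichotomy ((a:ℕ) + (b:ℕ)) 6 with h | h | h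
    · simp only [gmatFun, Matrix.of_apply]
      rw [dif_pos h]
    · simp only [gmatFun, Matrix.of_apply]
      rw [dif_neg (by omega : ¬ (a:ℕ) + (b:ℕ) < 6), dif_pos h]
      have hba : b.rev = a := by rw [Fin.ext_iff]; omega
      have hab : a.rev = b := by rw [Fin.ext_iff]; omega
      have := rel a b
      rw [hba, hab] at this
      linear_combination -this / 2
    · simp only [gmatFun, Matrix.of_apply]
      rw [dif_neg (by omega : ¬ (a:ℕ) + (b:ℕ) < 6),
        dif_neg (by omega : ¬ (a:ℕ) + (b:ℕ) = 6)]
      have := rel a b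
      linear_combination -this

lemma so7_rank : Module.finrank ℂ so7 = 21 := by
  rw [← gmat_range]
  rw [← (LinearEquiv.ofInjective gmat gmat_inj).finrank_eq]
  rw [Module.finrank_fintype_fun_eq_card]
  rfl

end Aux

theorem statement17 :
    Module.finrank ℂ ↥(so7 ⊓ stabilizer U1 ⊓ stabilizer U2 ⊓ stabilizer U3) = 1 ∧
    Module.finrank ℂ ↥so7 = 21 ∧ (20 = 21 - 1) := by
  refine ⟨?_, so7_rank, rfl⟩
  rw [inter_eq]
  exact finrank_span_singleton X0_ne_zero
end
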